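/- arXiv:2205.03527 — 7 statements merged into one kernel-verified Lean document; each statement's English description precedes it below -/
import Mathlib

section
/- For any ideal I ⊆ R, the set of antiderivatives admits a coordinate-free description: Δ(I) = { f ∈ I : δ(f) ∈ I for every ℂ-derivation δ of R }. In particular Δ(I) does not depend on the choice of the variables x₁,…,xₙ used to compute Tjurina ideals. -/
/-- The partial derivative `∂f/∂xⱼ` of a formal power series `f ∈ ℂ[[x₁,…,xₙ]]`,
defined coefficientwise. -/
noncomputable def pd {n : ℕ} (j : Fin n) (f : MvPowerSeries (Fin n) ℂ) :
    MvPowerSeries (Fin n) ℂ :=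
  fun d => ((d j + 1 : ℕ) : ℂ) * MvPowerSeries.coeff (d + Finsupp.single j 1) f

namespace TjAux

open MvPowerSeries

variable {n : ℕ}

lemma coeff_pd (j : Fin n) (f : MvPowerSeries (Fin n) ℂ) (e : Fin n →₀ ℕ) :
    coeff e (pd j f) = ((e j + 1 : ℕ) : ℂ) * coeff (e + Finsupp.single j 1) f := rfl


lemma pd_add (j : Fin n) (f g : MvPowerSeries (Fin n) ℂ) :
    pd j (f + g) = pd j f + pd j g := by
  ext e
  simp [coeff_pd, map_add, mul_add]

lemma pd_sub (j : Fin n) (f g : MvPowerSeries (Fin n) ℂ) :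
    pd j (f - g) = pd j f - pd j g := by
  ext e
  simp [coeff_pd, map_sub, mul_sub]

lemma pd_smul (j : Fin n) (c : ℂ) (f : MvPowerSeries (Fin n) ℂ) :
    pd j (c • f) = c • pd j f := by
  ext e
  simp [coeff_pd]
  ring

lemma sum_shift (j : Fin n) (e : Fin n →₀ ℕ) (F : (Fin n →₀ ℕ) → (Fin n →₀ ℕ) → ℂ) :
    ∑ p ∈ Finset.HasAntidiagonal.antidiagonal (e + Finsupp.single j 1), (((p.2 : Fin n →₀ ℕ) j : ℕ) : ℂ) * F p.1 p.2
      = ∑ p ∈ Finset.HasAntidiagonal.antidiagonal e,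
          ((p.2 j + 1 : ℕ) : ℂ) * F p.1 (p.2 + Finsupp.single j 1) := by
  classical
  set s := Finsupp.single j 1 with hs
  have hinj : Set.InjOn (fun p : (Fin n →₀ ℕ) × (Fin n →₀ ℕ) => (p.1, p.2 + s))
      (Finset.HasAntidiagonal.antidiagonal e) := by
    intro p _ q _ h
    simp only [Prod.mk.injEq] at h
    exact Prod.ext h.1 (add_right_cancel h.2)
  rw [show (∑ p ∈ Finset.HasAntidiagonal.antidiagonal e,
        ((p.2 j + 1 : ℕ) : ℂ) * F p.1 (p.2 + s))
      = ∑ q ∈ (Finset.HasAntidiagonal.antidiagonal e).image (fun p => (p.1, p.2 + s)),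
          ((q.2 j : ℕ) : ℂ) * F q.1 q.2 by
    rw [Finset.sum_image hinj]
    refine Finset.sum_congr rfl fun p _ => ?_
    congr 1
    simp [hs, Finsupp.add_apply, Finsupp.single_eq_same]]
  refine (Finset.sum_subset ?_ ?_).symm
  · intro q hq
    simp only [Finset.mem_image, Finset.HasAntidiagonal.mem_antidiagonal] at hq ⊢
    obtain ⟨p, hp, rfl⟩ := hq
    show p.1 + (p.2 + s) = e + s
    rw [← add_assoc, hp]
  · intro q hq hq'
    rcases Nat.eq_zero_or_pos (q.2 j) with h0 | h1
    · simp [h0]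
    · exfalso
      apply hq'
      simp only [Finset.mem_image, Finset.HasAntidiagonal.mem_antidiagonal] at hq ⊢
      have hle : s ≤ q.2 := by
        rw [hs, Finsupp.single_le_iff]
        exact h1
      refine ⟨(q.1, q.2 - s), ?_, ?_⟩
      · show q.1 + (q.2 - s) = e
        have : q.1 + (q.2 - s) + s = e + s := by
          rw [add_assoc, tsub_add_cancel_of_le hle, hq]
        exact add_right_cancel this
      · show (q.1, q.2 - s + s) = q
        rw [tsub_add_cancel_of_le hle]

lemma swap_antidiagonal (d : Fin n →₀ ℕ) (h : (Fin n →₀ ℕ) × (Fin n →₀ ℕ) → ℂ) :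
    ∑ p ∈ Finset.HasAntidiagonal.antidiagonal d, h p = ∑ p ∈ Finset.HasAntidiagonal.antidiagonal d, h p.swap :=
  Finset.sum_nbij' Prod.swap Prod.swap
    (by simp [add_comm]) (by simp [add_comm]) (by simp) (by simp) (by simp)

lemma sum_shift₁ (j : Fin n) (e : Fin n →₀ ℕ) (F : (Fin n →₀ ℕ) → (Fin n →₀ ℕ) → ℂ) :
    ∑ p ∈ Finset.HasAntidiagonal.antidiagonal (e + Finsupp.single j 1), (((p.1 : Fin n →₀ ℕ) j : ℕ) : ℂ) * F p.1 p.2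
      = ∑ p ∈ Finset.HasAntidiagonal.antidiagonal e,
          ((p.1 j + 1 : ℕ) : ℂ) * F (p.1 + Finsupp.single j 1) p.2 := by
  classical
  set s := Finsupp.single j 1 with hs
  have hinj : Set.InjOn (fun p : (Fin n →₀ ℕ) × (Fin n →₀ ℕ) => (p.1 + s, p.2))
      (Finset.HasAntidiagonal.antidiagonal e) := by
    intro p _ q _ h
    simp only [Prod.mk.injEq] at h
    exact Prod.ext (add_right_cancel h.1) h.2
  rw [show (∑ p ∈ Finset.HasAntidiagonal.antidiagonal e,
        ((p.1 j + 1 : ℕ) : ℂ) * F (p.1 + s) p.2)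
      = ∑ q ∈ (Finset.HasAntidiagonal.antidiagonal e).image (fun p => (p.1 + s, p.2)),
          ((q.1 j : ℕ) : ℂ) * F q.1 q.2 by
    rw [Finset.sum_image hinj]
    refine Finset.sum_congr rfl fun p _ => ?_
    congr 1
    simp [hs, Finsupp.add_apply, Finsupp.single_eq_same]]
  refine (Finset.sum_subset ?_ ?_).symm
  · intro q hq
    simp only [Finset.mem_image, Finset.HasAntidiagonal.mem_antidiagonal] at hq ⊢
    obtain ⟨p, hp, rfl⟩ := hq
    show p.1 + s + p.2 = e + s
    rw [add_right_comm, hp]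
  · intro q hq hq'
    rcases Nat.eq_zero_or_pos (q.1 j) with h0 | h1
    · simp [h0]
    · exfalso
      apply hq'
      simp only [Finset.mem_image, Finset.HasAntidiagonal.mem_antidiagonal] at hq ⊢
      have hle : s ≤ q.1 := by
        rw [hs, Finsupp.single_le_iff]
        exact h1
      refine ⟨(q.1 - s, q.2), ?_, ?_⟩
      · show q.1 - s + q.2 = e
        have : q.1 - s + q.2 + s = e + s := by
          rw [add_right_comm, tsub_add_cancel_of_le hle, hq]
        exact add_right_cancel this
      · show (q.1 - s + s, q.2) = q
        rw [tsub_add_cancel_of_le hle]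

lemma pd_mul (j : Fin n) (f g : MvPowerSeries (Fin n) ℂ) :
    pd j (f * g) = f * pd j g + g * pd j f := by
  classical
  ext e
  set s := Finsupp.single j 1 with hs
  rw [map_add, coeff_pd, coeff_mul, coeff_mul, coeff_mul, Finset.mul_sum]
  have hsplit : ∀ p ∈ Finset.HasAntidiagonal.antidiagonal (e + s),
      ((e j + 1 : ℕ) : ℂ) * (coeff p.1 f * coeff p.2 g)
        = ((p.2 j : ℕ) : ℂ) * (coeff p.1 f * coeff p.2 g)
          + ((p.1 j : ℕ) : ℂ) * (coeff p.1 f * coeff p.2 g) := by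
    intro p hp
    rw [Finset.HasAntidiagonal.mem_antidiagonal] at hp
    have : p.1 j + p.2 j = e j + 1 := by
      have := congrArg (fun q : Fin n →₀ ℕ => q j) hp
      simpa [hs, Finsupp.add_apply, Finsupp.single_eq_same] using this
    rw [← this]
    push_cast
    ring
  rw [Finset.sum_congr rfl hsplit, Finset.sum_add_distrib]
  congr 1
  · rw [sum_shift j e fun a b => coeff a f * coeff b g]
    refine Finset.sum_congr rfl fun p hp => ?_
    rw [coeff_pd]
    ring
  · rw [sum_shift₁ j e fun a b => coeff a f * coeff b g,
      swap_antidiagonal e fun p => coeff p.1 g * coeff p.2 (pd j f)]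
    refine Finset.sum_congr rfl fun p hp => ?_
    simp only [Prod.fst_swap, Prod.snd_swap, coeff_pd]
    ring

end TjAux

/-- The Tjurina ideal `T(f) = (f, ∂f/∂x₁, …, ∂f/∂xₙ)`. -/
noncomputable def Tj {n : ℕ} (f : MvPowerSeries (Fin n) ℂ) : Ideal (MvPowerSeries (Fin n) ℂ) :=
  Ideal.span ({f} ∪ Set.range fun j => pd j f)

/-- The set of antiderivatives `Δ(I) = {f : T(f) ⊆ I}`. -/
def Del {n : ℕ} (I : Ideal (MvPowerSeries (Fin n) ℂ)) : Set (MvPowerSeries (Fin n) ℂ) :=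
  {f | Tj f ≤ I}

/-- The Tjurina ideal of an arbitrary set of power series (for an ideal `J`, applied to its
carrier this computes `T(J) = T(g₁) + … + T(g_q)` for any system of generators). -/
noncomputable def Tset {n : ℕ} (A : Set (MvPowerSeries (Fin n) ℂ)) :
    Ideal (MvPowerSeries (Fin n) ℂ) :=
  Ideal.span (A ∪ {g | ∃ f ∈ A, ∃ j, g = pd j f})

/-- The maximal ideal `𝔪 = (x₁,…,xₙ)` of `ℂ[[x₁,…,xₙ]]`. -/
noncomputable def mm (n : ℕ) : Ideal (MvPowerSeries (Fin n) ℂ) :=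
  Ideal.span (Set.range (MvPowerSeries.X : Fin n → MvPowerSeries (Fin n) ℂ))

namespace TjAux

open MvPowerSeries

variable {n : ℕ}

/-- `pd j` as a derivation. -/
noncomputable def pdDer (j : Fin n) :
    Derivation ℂ (MvPowerSeries (Fin n) ℂ) (MvPowerSeries (Fin n) ℂ) where
  toFun := pd j
  map_add' := pd_add j
  map_smul' := pd_smul j
  map_one_eq_zero' := by
    classical
    ext e
    show coeff e (pd j 1) = coeff e 0
    rw [coeff_pd, coeff_one, if_neg, map_zero, mul_zero]
    intro h
    have := congrArg (fun q : Fin n →₀ ℕ => q j) h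
    simp [Finsupp.add_apply, Finsupp.single_eq_same] at this
  leibniz' a b := by
    show pd j (a * b) = a • pd j b + b • pd j a
    rw [smul_eq_mul, smul_eq_mul, pd_mul]

@[simp] lemma pdDer_apply (j : Fin n) (f : MvPowerSeries (Fin n) ℂ) :
    pdDer j f = pd j f := rfl

/-- total degree of a monomial exponent -/
def dg (e : Fin n →₀ ℕ) : ℕ := ∑ i, e i

lemma dg_add (a b : Fin n →₀ ℕ) : dg (a + b) = dg a + dg b := by
  simp [dg, Finsupp.add_apply, Finset.sum_add_distrib]

lemma dg_single (j : Fin n) : dg (Finsupp.single j 1) = 1 := by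
  classical
  simp [dg, Finsupp.single_apply]

lemma dg_eq_zero {e : Fin n →₀ ℕ} (h : dg e = 0) : e = 0 := by
  classical
  ext i
  have := Finset.sum_eq_zero_iff.mp h i (Finset.mem_univ i)
  simpa using this

lemma apply_le_dg (e : Fin n →₀ ℕ) (i : Fin n) : e i ≤ dg e :=
  Finset.single_le_sum (f := fun i => e i) (fun _ _ => Nat.zero_le _) (Finset.mem_univ i)

lemma X_mem_mm (j : Fin n) : (X j : MvPowerSeries (Fin n) ℂ) ∈ mm n :=
  Ideal.subset_span ⟨j, rfl⟩

lemma coeff_zero_of_mem_mm {b : MvPowerSeries (Fin n) ℂ} (hb : b ∈ mm n) :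
    coeff 0 b = 0 := by
  have hle : mm n ≤ RingHom.ker (constantCoeff) := by
    rw [mm, Ideal.span_le]
    rintro x ⟨j, rfl⟩
    simp [RingHom.mem_ker, constantCoeff_X]
  have := hle hb
  rw [RingHom.mem_ker] at this
  rw [coeff_zero_eq_constantCoeff]
  exact this

/-- coefficients of elements of `mm ^ k` vanish in degrees `< k`. -/
lemma coeff_eq_zero_of_mem_pow :
    ∀ (k : ℕ) (f : MvPowerSeries (Fin n) ℂ), f ∈ (mm n) ^ k →
      ∀ e, dg e < k → coeff e f = 0 := by
  intro k
  induction k with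
  | zero => intro f _ e he; omega
  | succ k ih =>
    intro f hf
    rw [pow_succ] at hf
    refine Submodule.mul_induction_on hf ?_ ?_
    · intro a ha b hb e he
      rw [coeff_mul]
      refine Finset.sum_eq_zero fun p hp => ?_
      rw [Finset.HasAntidiagonal.mem_antidiagonal] at hp
      have hd : dg p.1 + dg p.2 = dg e := by rw [← dg_add, hp]
      rcases lt_or_ge (dg p.1) k with h1 | h1
      · rw [ih a ha p.1 h1, zero_mul]
      · have h2 : dg p.2 = 0 := by omega
        rw [dg_eq_zero h2, coeff_zero_of_mem_mm hb, mul_zero]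
    · intro x y hx hy e he
      rw [map_add, hx e he, hy e he, add_zero]

/-- a derivation drops `mm`-adic order by at most one. -/
lemma der_mem_pow (δ : Derivation ℂ (MvPowerSeries (Fin n) ℂ) (MvPowerSeries (Fin n) ℂ)) :
    ∀ (k : ℕ) (g : MvPowerSeries (Fin n) ℂ), g ∈ (mm n) ^ (k + 1) → δ g ∈ (mm n) ^ k := by
  intro k
  induction k with
  | zero => intro g _; simpa using Submodule.mem_top
  | succ k ih =>
    intro g hg
    rw [pow_succ] at hg
    refine Submodule.mul_induction_on hg ?_ ?_
    · intro a ha b hb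
      rw [Derivation.leibniz, smul_eq_mul, smul_eq_mul]
      refine Ideal.add_mem _ (Ideal.mul_mem_right _ _ ha) ?_
      rw [pow_succ']
      exact Ideal.mul_mem_mul hb (ih a ha)
    · intro x y hx hy
      rw [map_add]
      exact Ideal.add_mem _ hx hy
end TjAux

namespace TjAux

open MvPowerSeries

variable {n : ℕ}

/-- series whose coefficients vanish in degrees `< k` lie in `mm ^ k`. -/
lemma mem_pow_of_coeff_eq_zero :
    ∀ (k : ℕ) (f : MvPowerSeries (Fin n) ℂ),
      (∀ e, dg e < k → coeff e f = 0) → f ∈ (mm n) ^ k := by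
  intro k
  induction k with
  | zero => intro f _; simpa using Submodule.mem_top
  | succ k ih =>
    intro f hf
    classical
    set g : Fin n → MvPowerSeries (Fin n) ℂ := fun j d =>
      if ∀ i, i < j → d i = 0 then coeff (d + Finsupp.single j 1) f else 0 with hgdef
    have hcoeffg : ∀ j d, coeff d (g j)
        = if ∀ i, i < j → d i = 0 then coeff (d + Finsupp.single j 1) f else 0 := fun _ _ => rfl
    have hXg : ∀ (j : Fin n) (e : Fin n →₀ ℕ), coeff e (X j * g j)
        = if Finsupp.single j 1 ≤ e then coeff (e - Finsupp.single j 1) (g j) else 0 := by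
      intro j e
      rw [X, coeff_monomial_mul]
      split_ifs with h
      · rw [one_mul]
      · rfl
    have hsum : f = ∑ j : Fin n, X j * g j := by
      ext e
      rw [map_sum]
      rcases eq_or_ne e 0 with rfl | hne
      · rw [Finset.sum_eq_zero, hf 0 (by simp [dg])]
        intro j _
        rw [hXg, if_neg]
        intro hle
        rw [Finsupp.single_le_iff] at hle
        simp at hle
      · have hsupp : e.support.Nonempty := Finsupp.support_nonempty_iff.mpr hne
        set j₀ := e.support.min' hsupp with hj₀
        have hj₀mem : j₀ ∈ e.support := Finset.min'_mem _ _
        have hj₀ne : e j₀ ≠ 0 := Finsupp.mem_support_iff.mp hj₀mem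
        have hlt : ∀ i, i < j₀ → e i = 0 := by
          intro i hi
          by_contra hei
          exact absurd (e.support.min'_le i (Finsupp.mem_support_iff.mpr hei)) (not_le.mpr hi)
        rw [Finset.sum_eq_single j₀]
        · have hle : Finsupp.single j₀ 1 ≤ e := Finsupp.single_le_iff.mpr (Nat.one_le_iff_ne_zero.mpr hj₀ne)
          rw [hXg, if_pos hle, hcoeffg, if_pos, tsub_add_cancel_of_le hle]
          intro i hi
          rw [Finsupp.tsub_apply, hlt i hi]
          exact Nat.zero_sub _
        · intro j _ hj
          rw [hXg]
          split_ifs with hle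
          · rw [hcoeffg, if_neg]
            intro hall
            have hj₀le : j₀ ≤ j := by
              apply e.support.min'_le
              rw [Finsupp.mem_support_iff]
              rw [Finsupp.single_le_iff] at hle
              omega
            have : j ≤ j₀ := by
              by_contra hc
              push_neg at hc
              have := hall j₀ hc
              rw [Finsupp.tsub_apply] at this
              have hsj : Finsupp.single j 1 j₀ = 0 := by
                rw [Finsupp.single_apply, if_neg]
                intro h; exact hj h
              omega
            exact hj (le_antisymm this hj₀le)
          · rfl
        · intro h
          exact absurd (Finset.mem_univ j₀) h
    rw [hsum]
    refine Ideal.sum_mem _ fun j _ => ?_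
    rw [pow_succ']
    refine Ideal.mul_mem_mul (X_mem_mm j) (ih (g j) ?_)
    intro d hd
    rw [hcoeffg]
    split_ifs with h
    · refine hf _ ?_
      rw [dg_add, dg_single]
      omega
    · rfl

/-- polynomial approximation up to any order. -/
lemma exists_poly (f : MvPowerSeries (Fin n) ℂ) (k : ℕ) :
    ∃ P : MvPolynomial (Fin n) ℂ,
      ∀ e, dg e < k → coeff e (f - (P : MvPowerSeries (Fin n) ℂ)) = 0 := by
  classical
  rcases Nat.eq_zero_or_pos n with h0 | hpos
  · subst h0
    refine ⟨MvPolynomial.C (coeff 0 f), fun e _ => ?_⟩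
    have he : e = 0 := Subsingleton.elim _ _
    rw [map_sub, he, MvPolynomial.coeff_coe, MvPolynomial.coeff_zero_C, sub_eq_zero]
  · set d : Fin n →₀ ℕ := Finsupp.equivFunOnFinite.symm (fun _ => k) with hd
    have hdapp : ∀ i, d i = k := fun i => rfl
    refine ⟨trunc ℂ d f, fun e he => ?_⟩
    rw [map_sub, MvPolynomial.coeff_coe, coeff_trunc, if_pos, sub_self]
    constructor
    · intro i
      have := apply_le_dg e i
      rw [hdapp]
      omega
    · intro hde
      have i : Fin n := ⟨0, hpos⟩
      have h1 := Finsupp.le_def.mp hde i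
      have h2 := apply_le_dg e i
      rw [hdapp] at h1
      omega

end TjAux

namespace TjAux

open MvPowerSeries

variable {n : ℕ}

lemma pd_X (j i : Fin n) :
    pd j (X i : MvPowerSeries (Fin n) ℂ) = if i = j then 1 else 0 := by
  classical
  ext e
  rw [coeff_pd, coeff_X]
  split_ifs with h1 h2 h2
  · -- e + single j 1 = single i 1, i = j
    rw [h2] at h1
    have he : e = 0 := by
      have h' : e + Finsupp.single j 1 = 0 + Finsupp.single j 1 := by rw [h1, zero_add]
      exact add_right_cancel h'
    simp [he, coeff_one]
  · -- e + single j 1 = single i 1, i ≠ j : contradiction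
    exfalso
    have := congrArg (fun q : Fin n →₀ ℕ => q j) h1
    simp only [Finsupp.add_apply, Finsupp.single_eq_same, Finsupp.single_apply] at this
    rw [if_neg h2] at this
    omega
  · -- e + single j 1 ≠ single i 1, i = j: coeff e 1 = 0, need e ≠ 0
    have he : e ≠ 0 := by
      intro he
      exact h1 (by rw [he, zero_add, h2])
    rw [mul_zero, coeff_one, if_neg he]
  · rw [mul_zero, map_zero]

lemma sum_pd_X (δ : Derivation ℂ (MvPowerSeries (Fin n) ℂ) (MvPowerSeries (Fin n) ℂ))
    (i : Fin n) : ∑ j : Fin n, δ (X j) * pd j (X i) = δ (X i) := by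
  classical
  rw [Finset.sum_eq_single i]
  · rw [pd_X, if_pos rfl, mul_one]
  · intro j _ hj
    rw [pd_X, if_neg (fun h => hj h.symm), mul_zero]
  · intro h
    exact absurd (Finset.mem_univ i) h

lemma pd_C (j : Fin n) (a : ℂ) :
    pd j (C a) = 0 := by
  classical
  ext e
  rw [coeff_pd, coeff_C, if_neg, mul_zero, map_zero]
  intro h
  have := congrArg (fun q : Fin n →₀ ℕ => q j) h
  simp [Finsupp.add_apply, Finsupp.single_eq_same] at this

lemma chain_poly (δ : Derivation ℂ (MvPowerSeries (Fin n) ℂ) (MvPowerSeries (Fin n) ℂ))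
    (P : MvPolynomial (Fin n) ℂ) :
    δ (P : MvPowerSeries (Fin n) ℂ)
      = ∑ j : Fin n, δ (X j) * pd j (P : MvPowerSeries (Fin n) ℂ) := by
  induction P using MvPolynomial.induction_on with
  | C a =>
    rw [MvPolynomial.coe_C, c_eq_algebraMap, Derivation.map_algebraMap]
    rw [Finset.sum_eq_zero]
    intro j _
    rw [← c_eq_algebraMap, pd_C, mul_zero]
  | add P Q hP hQ =>
    rw [MvPolynomial.coe_add, map_add, hP, hQ, ← Finset.sum_add_distrib]
    refine Finset.sum_congr rfl fun j _ => ?_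
    rw [pd_add, mul_add]
  | mul_X P i hP =>
    rw [MvPolynomial.coe_mul, MvPolynomial.coe_X, Derivation.leibniz, smul_eq_mul, smul_eq_mul]
    have : ∀ j : Fin n, δ (X j) * pd j ((P : MvPowerSeries (Fin n) ℂ) * X i)
        = (P : MvPowerSeries (Fin n) ℂ) * (δ (X j) * pd j (X i))
          + X i * (δ (X j) * pd j (P : MvPowerSeries (Fin n) ℂ)) := by
      intro j
      rw [pd_mul]
      ring
    rw [Finset.sum_congr rfl fun j _ => this j, Finset.sum_add_distrib,
      ← Finset.mul_sum, ← Finset.mul_sum, sum_pd_X, hP]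

/-- The chain rule for derivations of `ℂ[[x₁,…,xₙ]]`. -/
lemma chain (δ : Derivation ℂ (MvPowerSeries (Fin n) ℂ) (MvPowerSeries (Fin n) ℂ))
    (f : MvPowerSeries (Fin n) ℂ) :
    δ f = ∑ j : Fin n, δ (X j) * pd j f := by
  have main : ∀ e, coeff e (δ f - ∑ j : Fin n, δ (X j) * pd j f) = 0 := by
    intro e
    set K := dg e + 1 with hK
    obtain ⟨P, hP⟩ := exists_poly f (K + 1)
    set r := f - (P : MvPowerSeries (Fin n) ℂ) with hr
    have hδr : δ f - δ r = δ (P : MvPowerSeries (Fin n) ℂ) := by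
      rw [← map_sub, hr, sub_sub_cancel]
    have hpdr : ∀ j : Fin n, pd j f - pd j r = pd j (P : MvPowerSeries (Fin n) ℂ) := by
      intro j
      rw [← pd_sub, hr, sub_sub_cancel]
    have hsplit : δ f - ∑ j : Fin n, δ (X j) * pd j f
        = δ r - ∑ j : Fin n, δ (X j) * pd j r := by
      rw [← sub_eq_zero]
      calc δ f - ∑ j : Fin n, δ (X j) * pd j f
            - (δ r - ∑ j : Fin n, δ (X j) * pd j r)
          = (δ f - δ r) - ∑ j : Fin n, (δ (X j) * pd j f - δ (X j) * pd j r) := by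
            rw [Finset.sum_sub_distrib]; ring
        _ = δ (P : MvPowerSeries (Fin n) ℂ)
            - ∑ j : Fin n, δ (X j) * pd j (P : MvPowerSeries (Fin n) ℂ) := by
            rw [hδr]
            congr 1
            refine Finset.sum_congr rfl fun j _ => ?_
            rw [← mul_sub, hpdr j]
        _ = 0 := by rw [chain_poly δ P, sub_self]
    have hrmem : r ∈ (mm n) ^ (K + 1) :=
      mem_pow_of_coeff_eq_zero (K + 1) r hP
    have h1 : δ r ∈ (mm n) ^ K := der_mem_pow δ K r hrmem
    have h2 : (∑ j : Fin n, δ (X j) * pd j r) ∈ (mm n) ^ K := by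
      refine Ideal.sum_mem _ fun j _ => Ideal.mul_mem_left _ _ ?_
      refine mem_pow_of_coeff_eq_zero K _ ?_
      intro d hd
      rw [coeff_pd]
      rw [hP (d + Finsupp.single j 1) (by rw [dg_add, dg_single]; omega), mul_zero]
    rw [hsplit, map_sub]
    rw [coeff_eq_zero_of_mem_pow K _ h1 e (by omega),
      coeff_eq_zero_of_mem_pow K _ h2 e (by omega), sub_self]
  ext e
  have := main e
  rw [map_sub, sub_eq_zero] at this
  exact this

end TjAux

/-- coordinate-free description of `Δ(I)`. -/
theorem stmt_2 {n : ℕ} (I : Ideal (MvPowerSeries (Fin n) ℂ)) :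
    Del I = {f : MvPowerSeries (Fin n) ℂ | f ∈ I ∧
      ∀ δ : Derivation ℂ (MvPowerSeries (Fin n) ℂ) (MvPowerSeries (Fin n) ℂ), δ f ∈ I} := by
  ext f
  simp only [Del, Set.mem_setOf_eq, Tj]
  constructor
  · intro h
    have hf : f ∈ I := h (Ideal.subset_span (Or.inl rfl))
    have hpd : ∀ j, pd j f ∈ I := fun j => h (Ideal.subset_span (Or.inr ⟨j, rfl⟩))
    refine ⟨hf, fun δ => ?_⟩
    rw [TjAux.chain δ f]
    exact Ideal.sum_mem _ fun j _ => Ideal.mul_mem_left _ _ (hpd j)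
  · rintro ⟨hf, hδ⟩
    rw [Ideal.span_le]
    rintro g (rfl | ⟨j, rfl⟩)
    · exact hf
    · exact hδ (TjAux.pdDer j)
end

section
/- For every k ≥ 1, the ideal of antiderivatives of the k-th power of the maximal ideal of R is the (k+1)-st power: Δ(𝔪^k) = 𝔪^{k+1}. -/
/-! ### Auxiliary material -/

/-- Total degree of an exponent. -/
def deg {n : ℕ} (d : Fin n →₀ ℕ) : ℕ := d.sum fun _ m => m

lemma deg_add {n : ℕ} (a b : Fin n →₀ ℕ) : deg (a + b) = deg a + deg b :=
  Finsupp.sum_add_index' (fun _ => rfl) (fun _ _ _ => rfl)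

lemma deg_single {n : ℕ} (j : Fin n) : deg (Finsupp.single j 1) = 1 := by
  simp [deg, Finsupp.sum_single_index]

lemma deg_zero {n : ℕ} : deg (0 : Fin n →₀ ℕ) = 0 := by
  simp [deg]

/-- The ideal of power series whose coefficients vanish in degrees `< k`. -/
noncomputable def Jk (n k : ℕ) : Ideal (MvPowerSeries (Fin n) ℂ) where
  carrier := {f | ∀ d, deg d < k → MvPowerSeries.coeff d f = 0}
  zero_mem' := by intro d _; simp
  add_mem' := by
    intro f g hf hg d hd
    simp [hf d hd, hg d hd]
  smul_mem' := by
    intro c f hf d hd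
    rw [smul_eq_mul, MvPowerSeries.coeff_mul]
    refine Finset.sum_eq_zero fun p hp => ?_
    rw [Finset.HasAntidiagonal.mem_antidiagonal] at hp
    have h2 : deg p.2 < k := by
      have := deg_add p.1 p.2
      rw [hp] at this
      omega
    rw [hf p.2 h2, mul_zero]

lemma pd_coeff {n : ℕ} (j : Fin n) (f : MvPowerSeries (Fin n) ℂ) (c : Fin n →₀ ℕ) :
    MvPowerSeries.coeff c (pd j f) =
      ((c j + 1 : ℕ) : ℂ) * MvPowerSeries.coeff (c + Finsupp.single j 1) f := rfl

lemma pd_mem_Jk {n k : ℕ} (j : Fin n) (f : MvPowerSeries (Fin n) ℂ)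
    (hf : f ∈ Jk n (k + 1)) : pd j f ∈ Jk n k := by
  intro d hd
  rw [pd_coeff, hf _ (by rw [deg_add, deg_single]; omega), mul_zero]

lemma coeff_X_mul' {n : ℕ} (j : Fin n) (g : MvPowerSeries (Fin n) ℂ) (d : Fin n →₀ ℕ) :
    MvPowerSeries.coeff d (MvPowerSeries.X j * g) =
      if Finsupp.single j 1 ≤ d then MvPowerSeries.coeff (d - Finsupp.single j 1) g else 0 := by
  classical
  rw [MvPowerSeries.X_def, MvPowerSeries.coeff_monomial_mul]
  split_ifs with h
  · rw [one_mul]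
  · rfl

open scoped Classical in
/-- A "primitive-like" decomposition factor. -/
noncomputable def gj {n : ℕ} (f : MvPowerSeries (Fin n) ℂ) (j : Fin n) :
    MvPowerSeries (Fin n) ℂ :=
  fun c : Fin n →₀ ℕ => if ∀ i < j, ((c + Finsupp.single j 1 : Fin n →₀ ℕ)) i = 0
    then MvPowerSeries.coeff (c + Finsupp.single j 1) f else 0

open scoped Classical in
lemma gj_coeff {n : ℕ} (f : MvPowerSeries (Fin n) ℂ) (j : Fin n) (c : Fin n →₀ ℕ) :
    MvPowerSeries.coeff c (gj f j) =
      if ∀ i < j, ((c + Finsupp.single j 1 : Fin n →₀ ℕ)) i = 0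
      then MvPowerSeries.coeff (c + Finsupp.single j 1) f else 0 := rfl

lemma gj_mem_Jk {n k : ℕ} (f : MvPowerSeries (Fin n) ℂ) (j : Fin n)
    (hf : f ∈ Jk n (k + 1)) : gj f j ∈ Jk n k := by
  classical
  intro c hc
  rw [gj_coeff]
  split_ifs with h
  · exact hf _ (by rw [deg_add, deg_single]; omega)
  · rfl

lemma decomp {n : ℕ} (f : MvPowerSeries (Fin n) ℂ)
    (h0 : MvPowerSeries.coeff 0 f = 0) :
    f = ∑ j, MvPowerSeries.X j * gj f j := by
  classical
  ext d
  rw [map_sum]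
  by_cases hd : d = 0
  · subst hd
    rw [h0]
    symm
    refine Finset.sum_eq_zero fun j _ => ?_
    rw [coeff_X_mul', if_neg]
    intro h
    have := Finsupp.single_le_iff.mp h
    simp at this
  · have hs : d.support.Nonempty := Finsupp.support_nonempty_iff.mpr hd
    set j0 := d.support.min' hs with hj0
    have hj0mem : j0 ∈ d.support := d.support.min'_mem hs
    have hdj0 : d j0 ≠ 0 := Finsupp.mem_support_iff.mp hj0mem
    have hle0 : Finsupp.single j0 1 ≤ d :=
      Finsupp.single_le_iff.mpr (Nat.one_le_iff_ne_zero.mpr hdj0)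
    symm
    rw [Finset.sum_eq_single j0]
    · rw [coeff_X_mul', if_pos hle0, gj_coeff, tsub_add_cancel_of_le hle0, if_pos]
      intro i hi
      by_contra hne
      exact absurd (d.support.min'_le i (Finsupp.mem_support_iff.mpr hne)) (not_le_of_gt hi)
    · intro j _ hj
      rw [coeff_X_mul']
      split_ifs with h1
      · rw [gj_coeff, tsub_add_cancel_of_le h1, if_neg]
        intro hall
        have hdj : d j ≠ 0 := Nat.one_le_iff_ne_zero.mp (Finsupp.single_le_iff.mp h1)
        have h1' : j0 ≤ j := d.support.min'_le j (Finsupp.mem_support_iff.mpr hdj)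
        rcases lt_or_eq_of_le h1' with h2 | h2
        · exact hdj0 (hall j0 h2)
        · exact hj h2.symm
      · rfl
    · intro h
      exact absurd (Finset.mem_univ j0) h

lemma mm_le_Jk1 (n : ℕ) : mm n ≤ Jk n 1 := by
  rw [mm, Ideal.span_le]
  rintro _ ⟨i, rfl⟩ d hd
  classical
  rw [MvPowerSeries.coeff_X, if_neg]
  intro h
  subst h
  rw [deg_single] at hd
  omega

lemma Jk_mul_mem {n a b : ℕ} {f g : MvPowerSeries (Fin n) ℂ}
    (hf : f ∈ Jk n a) (hg : g ∈ Jk n b) : f * g ∈ Jk n (a + b) := by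
  intro d hd
  classical
  rw [MvPowerSeries.coeff_mul]
  refine Finset.sum_eq_zero fun p hp => ?_
  rw [Finset.HasAntidiagonal.mem_antidiagonal] at hp
  have hda := deg_add p.1 p.2
  rw [hp] at hda
  by_cases h1 : deg p.1 < a
  · rw [hf p.1 h1, zero_mul]
  · rw [hg p.2 (by omega), mul_zero]

lemma pow_le_Jk (n k : ℕ) : mm n ^ k ≤ Jk n k := by
  induction k with
  | zero => intro f _ d hd; exact absurd hd (Nat.not_lt_zero _)
  | succ k ih =>
    rw [pow_succ]
    exact Ideal.mul_le.mpr fun r hr s hs => Jk_mul_mem (ih hr) (mm_le_Jk1 n hs)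

lemma Jk_le_pow (n k : ℕ) : Jk n k ≤ mm n ^ k := by
  induction k with
  | zero => rw [pow_zero, Ideal.one_eq_top]; exact le_top
  | succ k ih =>
    intro f hf
    have h0 : MvPowerSeries.coeff 0 f = 0 := hf 0 (by rw [deg_zero]; omega)
    rw [decomp f h0]
    refine Ideal.sum_mem _ fun j _ => ?_
    rw [pow_succ']
    exact Ideal.mul_mem_mul (Ideal.subset_span ⟨j, rfl⟩) (ih (gj_mem_Jk f j hf))

lemma mm_pow_eq (n k : ℕ) : mm n ^ k = Jk n k :=
  le_antisymm (pow_le_Jk n k) (Jk_le_pow n k)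

/-- `Δ(𝔪^k) = 𝔪^{k+1}` for `k ≥ 1`. -/
theorem stmt_6 {n : ℕ} (k : ℕ) (hk : 1 ≤ k) :
    Del (mm n ^ k) = ↑(mm n ^ (k + 1)) := by
  ext f
  constructor
  · intro hf
    have hf' : Tj f ≤ mm n ^ k := hf
    have hfm : f ∈ mm n ^ k := hf' (Ideal.subset_span (Or.inl rfl))
    have hpd : ∀ j, pd j f ∈ mm n ^ k := fun j => hf' (Ideal.subset_span (Or.inr ⟨j, rfl⟩))
    show f ∈ mm n ^ (k + 1)
    rw [mm_pow_eq]
    intro d hd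
    by_cases hd0 : d = 0
    · subst hd0
      exact (mm_pow_eq n k ▸ hfm) 0 (by rw [deg_zero]; omega)
    · have : ∃ j, d j ≠ 0 := by
        by_contra h
        push_neg at h
        exact hd0 (Finsupp.ext h)
      obtain ⟨j, hj⟩ := this
      have hle : Finsupp.single j 1 ≤ d :=
        Finsupp.single_le_iff.mpr (Nat.one_le_iff_ne_zero.mpr hj)
      have hdeg : deg d = deg (d - Finsupp.single j 1) + 1 := by
        conv_lhs => rw [← tsub_add_cancel_of_le hle]
        rw [deg_add, deg_single]
      have hpdj := (mm_pow_eq n k ▸ hpd j) (d - Finsupp.single j 1) (by omega)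
      rw [pd_coeff, tsub_add_cancel_of_le hle] at hpdj
      rcases mul_eq_zero.mp hpdj with h | h
      · exact absurd h (Nat.cast_ne_zero.mpr (Nat.succ_ne_zero _))
      · exact h
  · intro hf
    have hf' : f ∈ mm n ^ (k + 1) := hf
    show Tj f ≤ mm n ^ k
    rw [Tj, Ideal.span_le]
    rintro g (hg | ⟨j, rfl⟩)
    · rw [Set.mem_singleton_iff] at hg
      subst hg
      exact Ideal.pow_le_pow_right (by omega) hf'
    · show pd j f ∈ mm n ^ k
      rw [mm_pow_eq]
      exact pd_mem_Jk j f (mm_pow_eq n (k + 1) ▸ hf')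
end

section
/- If 𝔭 ⊂ R is a prime ideal and I ⊆ R is a 𝔭-primary ideal, then the ideal of antiderivatives Δ(I) is also a 𝔭-primary ideal (in particular the radical of Δ(I) equals 𝔭). -/
open MvPowerSeries Finsupp Finset in
lemma coeff_pd {n : ℕ} (j : Fin n) (f : MvPowerSeries (Fin n) ℂ) (d : Fin n →₀ ℕ) :
    MvPowerSeries.coeff d (pd j f) =
      ((d j + 1 : ℕ) : ℂ) * MvPowerSeries.coeff (d + Finsupp.single j 1) f := rfl

open MvPowerSeries Finsupp Finset in
lemma pd_add {n : ℕ} (j : Fin n) (f g : MvPowerSeries (Fin n) ℂ) :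
    pd j (f + g) = pd j f + pd j g := by
  apply MvPowerSeries.ext; intro d
  simp [coeff_pd, map_add, mul_add]

open MvPowerSeries Finsupp Finset in
lemma pd_mul {n : ℕ} (j : Fin n) (f g : MvPowerSeries (Fin n) ℂ) :
    pd j (f * g) = pd j f * g + f * pd j g := by
  classical
  apply MvPowerSeries.ext; intro d
  set e : Fin n →₀ ℕ := Finsupp.single j 1 with he
  rw [map_add, MvPowerSeries.coeff_mul, MvPowerSeries.coeff_mul, coeff_pd,
    MvPowerSeries.coeff_mul, Finset.mul_sum]
  have hsplit : ∀ q ∈ HasAntidiagonal.antidiagonal (d + e),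
      ((d j + 1 : ℕ) : ℂ) * (MvPowerSeries.coeff q.1 f * MvPowerSeries.coeff q.2 g)
      = (q.1 j : ℂ) * (MvPowerSeries.coeff q.1 f * MvPowerSeries.coeff q.2 g)
        + (q.2 j : ℂ) * (MvPowerSeries.coeff q.1 f * MvPowerSeries.coeff q.2 g) := by
    intro q hq
    rw [HasAntidiagonal.mem_antidiagonal] at hq
    have h1 : q.1 j + q.2 j = d j + 1 := by
      have := congrArg (fun h : Fin n →₀ ℕ => h j) hq
      simpa [he] using this
    rw [← h1]
    push_cast
    ring
  rw [Finset.sum_congr rfl hsplit, Finset.sum_add_distrib]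
  congr 1
  · -- first sum
    rw [← Finset.sum_filter_of_ne (p := fun q => q.1 j ≠ 0)
      (by intro q hq hne h0; exact hne (by simp [h0]))]
    refine Finset.sum_bij' (fun q _ => (q.1 - e, q.2)) (fun p _ => (p.1 + e, p.2)) ?_ ?_ ?_ ?_ ?_
    · intro q hq
      simp only [Finset.mem_filter, HasAntidiagonal.mem_antidiagonal] at hq
      have hle : e ≤ q.1 := by
        rw [he, Finsupp.single_le_iff]
        omega
      rw [HasAntidiagonal.mem_antidiagonal]
      have : q.1 - e + q.2 + e = d + e := by
        rw [add_right_comm, tsub_add_cancel_of_le hle, hq.1]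
      exact add_right_cancel this
    · intro p hp
      rw [HasAntidiagonal.mem_antidiagonal] at hp
      simp only [Finset.mem_filter, HasAntidiagonal.mem_antidiagonal]
      constructor
      · rw [add_right_comm, hp]
      · simp [he]
    · intro q hq
      simp only [Finset.mem_filter, HasAntidiagonal.mem_antidiagonal] at hq
      have hle : e ≤ q.1 := by
        rw [he, Finsupp.single_le_iff]; omega
      simp [tsub_add_cancel_of_le hle]
    · intro p hp
      simp
    · intro q hq
      simp only [Finset.mem_filter, HasAntidiagonal.mem_antidiagonal] at hq
      have hle : e ≤ q.1 := by
        rw [he, Finsupp.single_le_iff]; omega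
      rw [coeff_pd]
      have h1 : (q.1 - e) + e = q.1 := tsub_add_cancel_of_le hle
      have h2 : (q.1 - e) j + 1 = q.1 j := by
        have := congrArg (fun h : Fin n →₀ ℕ => h j) h1
        simpa [he] using this
      rw [h1, h2]
      ring
  · -- second sum
    rw [← Finset.sum_filter_of_ne (p := fun q => q.2 j ≠ 0)
      (by intro q hq hne h0; exact hne (by simp [h0]))]
    refine Finset.sum_bij' (fun q _ => (q.1, q.2 - e)) (fun p _ => (p.1, p.2 + e)) ?_ ?_ ?_ ?_ ?_
    · intro q hq
      simp only [Finset.mem_filter, HasAntidiagonal.mem_antidiagonal] at hq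
      have hle : e ≤ q.2 := by
        rw [he, Finsupp.single_le_iff]; omega
      rw [HasAntidiagonal.mem_antidiagonal]
      have : q.1 + (q.2 - e) + e = d + e := by
        rw [add_assoc, tsub_add_cancel_of_le hle, hq.1]
      exact add_right_cancel this
    · intro p hp
      rw [HasAntidiagonal.mem_antidiagonal] at hp
      simp only [Finset.mem_filter, HasAntidiagonal.mem_antidiagonal]
      constructor
      · rw [← add_assoc, hp]
      · simp [he]
    · intro q hq
      simp only [Finset.mem_filter, HasAntidiagonal.mem_antidiagonal] at hq
      have hle : e ≤ q.2 := by
        rw [he, Finsupp.single_le_iff]; omega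
      simp [tsub_add_cancel_of_le hle]
    · intro p hp
      simp
    · intro q hq
      simp only [Finset.mem_filter, HasAntidiagonal.mem_antidiagonal] at hq
      have hle : e ≤ q.2 := by
        rw [he, Finsupp.single_le_iff]; omega
      rw [coeff_pd]
      have h1 : (q.2 - e) + e = q.2 := tsub_add_cancel_of_le hle
      have h2 : (q.2 - e) j + 1 = q.2 j := by
        have := congrArg (fun h : Fin n →₀ ℕ => h j) h1
        simpa [he] using this
      rw [h1, h2]
      ring

lemma pd_zero {n : ℕ} (j : Fin n) : pd j (0 : MvPowerSeries (Fin n) ℂ) = 0 := by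
  apply MvPowerSeries.ext; intro d
  simp [coeff_pd]

lemma pd_pow_succ {n : ℕ} (j : Fin n) (f : MvPowerSeries (Fin n) ℂ) (m : ℕ) :
    ∃ h, pd j (f ^ (m + 1)) = h * f ^ m := by
  induction m with
  | zero => exact ⟨pd j f, by simp⟩
  | succ m ih =>
    obtain ⟨h, hh⟩ := ih
    refine ⟨pd j f + h, ?_⟩
    have : f ^ (m + 1 + 1) = f * f ^ (m + 1) := by ring
    rw [this, pd_mul, hh]
    ring


lemma mem_Del_iff {n : ℕ} (I : Ideal (MvPowerSeries (Fin n) ℂ)) (f : MvPowerSeries (Fin n) ℂ) :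
    f ∈ Del I ↔ f ∈ I ∧ ∀ j, pd j f ∈ I := by
  unfold Del Tj
  rw [Set.mem_setOf_eq, Ideal.span_le, Set.union_subset_iff, Set.singleton_subset_iff,
    Set.range_subset_iff]
  simp only [SetLike.mem_coe]

noncomputable def DelIdeal {n : ℕ} (I : Ideal (MvPowerSeries (Fin n) ℂ)) :
    Ideal (MvPowerSeries (Fin n) ℂ) where
  carrier := Del I
  add_mem' := by
    intro a b ha hb
    rw [mem_Del_iff] at ha hb ⊢
    exact ⟨I.add_mem ha.1 hb.1, fun j => by rw [pd_add]; exact I.add_mem (ha.2 j) (hb.2 j)⟩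
  zero_mem' := by
    rw [mem_Del_iff]
    exact ⟨I.zero_mem, fun j => by rw [pd_zero]; exact I.zero_mem⟩
  smul_mem' := by
    intro c x hx
    rw [mem_Del_iff] at hx ⊢
    simp only [smul_eq_mul]
    refine ⟨I.mul_mem_left c hx.1, fun j => ?_⟩
    rw [pd_mul]
    exact I.add_mem (I.mul_mem_left _ hx.1) (I.mul_mem_left _ (hx.2 j))


/-- if `I` is `𝔭`-primary then `Δ(I)` is a `𝔭`-primary ideal. -/
theorem stmt_9 {n : ℕ} (𝔭 I : Ideal (MvPowerSeries (Fin n) ℂ)) (hp : 𝔭.IsPrime)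
    (hI : I.IsPrimary) (hrad : I.radical = 𝔭) :
    ∃ D : Ideal (MvPowerSeries (Fin n) ℂ),
      (D : Set (MvPowerSeries (Fin n) ℂ)) = Del I ∧ D.IsPrimary ∧ D.radical = 𝔭 := by
  rw [Ideal.isPrimary_iff] at hI
  have hmem : ∀ f, f ∈ DelIdeal I ↔ f ∈ I ∧ ∀ j, pd j f ∈ I := fun f => mem_Del_iff I f
  have hDler : DelIdeal I ≤ I := fun f hf => ((hmem f).mp hf).1
  have hradD : (DelIdeal I).radical = 𝔭 := by
    apply le_antisymm
    · rw [← hrad]; exact Ideal.radical_mono hDler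
    · intro f hf
      rw [← hrad] at hf
      obtain ⟨k, hk⟩ := hf
      refine ⟨k + 1, (hmem _).mpr ⟨?_, fun j => ?_⟩⟩
      · rw [pow_succ]; exact I.mul_mem_right _ hk
      · obtain ⟨h, hh⟩ := pd_pow_succ j f k
        rw [hh]; exact I.mul_mem_left _ hk
  refine ⟨DelIdeal I, rfl, ?_, hradD⟩
  rw [Ideal.isPrimary_iff]
  constructor
  · intro htop
    have : (1 : MvPowerSeries (Fin n) ℂ) ∈ DelIdeal I := htop ▸ Submodule.mem_top
    exact hI.1 ((Ideal.eq_top_iff_one I).mpr ((hmem 1).mp this).1)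
  · intro x y hxy
    rw [hradD]
    by_cases hy : y ∈ 𝔭
    · exact Or.inr hy
    · left
      rw [hmem] at hxy ⊢
      have hx : x ∈ I := by
        rcases hI.2 hxy.1 with h | h
        · exact h
        · exact absurd (hrad ▸ h) hy
      refine ⟨hx, fun j => ?_⟩
      have h1 : pd j x * y + x * pd j y ∈ I := by rw [← pd_mul]; exact hxy.2 j
      have h2 : pd j x * y ∈ I := by
        have h3 : x * pd j y ∈ I := I.mul_mem_right _ hx
        have := I.sub_mem h1 h3
        simpa using this
      rcases hI.2 h2 with h | h
      · exact h
      · exact absurd (hrad ▸ h) hy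
end

section
/- Let n ≥ 2, let f ∈ 𝔪 ⊆ R be irreducible, and let k ≥ 1. Then the principal ideal (f^k) is a Tjurina ideal if and only if f has multiplicity one, i.e. ord(f) = 1 (equivalently f ∈ 𝔪 \ 𝔪²). -/
namespace Stmt12

open MvPowerSeries Finsupp

variable {n : ℕ}

abbrev RR (n : ℕ) := MvPowerSeries (Fin n) ℂ

noncomputable instance : IsDomain (RR n) := NoZeroDivisors.to_isDomain _

lemma coeff_pd (j : Fin n) (f : RR n) (d : Fin n →₀ ℕ) :
    MvPowerSeries.coeff d (pd j f)
      = ((d j + 1 : ℕ) : ℂ) * MvPowerSeries.coeff (d + single j 1) f := rfl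

def deg (d : Fin n →₀ ℕ) : ℕ := ∑ i, d i

lemma deg_add (u v : Fin n →₀ ℕ) : deg (u + v) = deg u + deg v := by
  simp [deg, Finset.sum_add_distrib]

lemma deg_single (j : Fin n) (r : ℕ) : deg (single j r) = r := by
  simp [deg, Finsupp.single_apply]

lemma deg_eq_zero_iff (d : Fin n →₀ ℕ) : deg d = 0 ↔ d = 0 := by
  constructor
  · intro h
    ext i
    exact Finset.sum_eq_zero_iff.1 h i (Finset.mem_univ i)
  · rintro rfl; simp [deg]

lemma apply_le_deg (d : Fin n →₀ ℕ) (j : Fin n) : d j ≤ deg d :=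
  Finset.single_le_sum (f := fun i => d i) (fun _ _ => Nat.zero_le _) (Finset.mem_univ j)

lemma uj_from (u v d : Fin n →₀ ℕ) (j : Fin n) (h : u + v = d + single j 1) :
    u j + v j = d j + 1 := by
  have h1 := DFunLike.congr_fun h j
  simpa [Finsupp.add_apply, Finsupp.single_eq_same] using h1

lemma single_le_of_ne (u : Fin n →₀ ℕ) (j : Fin n) (h : u j ≠ 0) : single j 1 ≤ u := by
  rw [Finsupp.single_le_iff]; omega

lemma sub_single_add_cancel (u : Fin n →₀ ℕ) (j : Fin n) (h : u j ≠ 0) :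
    (u - single j 1) + single j 1 = u :=
  tsub_add_cancel_of_le (single_le_of_ne u j h)

lemma sub_single_apply_same (u : Fin n →₀ ℕ) (j : Fin n) (h : u j ≠ 0) :
    (u - single j 1 : Fin n →₀ ℕ) j + 1 = u j := by
  rw [Finsupp.tsub_apply, Finsupp.single_eq_same]
  omega

lemma sub_single_add (u v d : Fin n →₀ ℕ) (j : Fin n) (h : u + v = d + single j 1)
    (hj : u j ≠ 0) : (u - single j 1) + v = d := by
  have h2 : ((u - single j 1) + v) + single j 1 = d + single j 1 := by
    rw [add_right_comm, sub_single_add_cancel u j hj, h]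
  exact add_right_cancel h2

lemma add_single_add (u v d : Fin n →₀ ℕ) (j : Fin n) (h : u + v = d) :
    (u + single j 1) + v = d + single j 1 := by
  rw [add_right_comm, h]

lemma add_single_apply_same (u : Fin n →₀ ℕ) (j : Fin n) :
    (u + single j 1 : Fin n →₀ ℕ) j = u j + 1 := by
  rw [Finsupp.add_apply, Finsupp.single_eq_same]

/-- Key reindexing sum lemma. -/
lemma shift_sum (j : Fin n) (d : Fin n →₀ ℕ) (F G : (Fin n →₀ ℕ) → ℂ) :
    ∑ p ∈ (Finset.HasAntidiagonal.antidiagonal (d + single j 1) : Finset ((Fin n →₀ ℕ) × (Fin n →₀ ℕ))),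
        ((p.1 j : ℕ) : ℂ) * (F p.1 * G p.2)
      = ∑ p ∈ (Finset.HasAntidiagonal.antidiagonal d : Finset ((Fin n →₀ ℕ) × (Fin n →₀ ℕ))),
          ((p.1 j + 1 : ℕ) : ℂ) * (F (p.1 + single j 1) * G p.2) := by
  rw [← Finset.sum_filter_of_ne (p := fun p : (Fin n →₀ ℕ) × (Fin n →₀ ℕ) => p.1 j ≠ 0)
    (fun p _ hne h0 => by simp [h0] at hne)]
  refine Finset.sum_bij' (fun p _ => (p.1 - single j 1, p.2)) (fun q _ => (q.1 + single j 1, q.2))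
    ?_ ?_ ?_ ?_ ?_
  · rintro ⟨u, v⟩ hp
    simp only [Finset.mem_filter, Finset.HasAntidiagonal.mem_antidiagonal] at hp
    simp only [Finset.HasAntidiagonal.mem_antidiagonal]
    exact sub_single_add u v d j hp.1 hp.2
  · rintro ⟨u, v⟩ hq
    simp only [Finset.HasAntidiagonal.mem_antidiagonal] at hq
    simp only [Finset.mem_filter, Finset.HasAntidiagonal.mem_antidiagonal]
    refine ⟨add_single_add u v d j hq, ?_⟩
    have := add_single_apply_same (n := n) u j
    omega
  · rintro ⟨u, v⟩ hp
    simp only [Finset.mem_filter, Finset.HasAntidiagonal.mem_antidiagonal] at hp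
    simp [sub_single_add_cancel u j hp.2]
  · rintro ⟨u, v⟩ _
    simp
  · rintro ⟨u, v⟩ hp
    simp only [Finset.mem_filter, Finset.HasAntidiagonal.mem_antidiagonal] at hp
    rw [sub_single_add_cancel u j hp.2, sub_single_apply_same u j hp.2]

lemma pd_mul (j : Fin n) (f g : RR n) : pd j (f * g) = pd j f * g + f * pd j g := by
  apply MvPowerSeries.ext; intro d
  rw [map_add, MvPowerSeries.coeff_mul, MvPowerSeries.coeff_mul, coeff_pd,
    MvPowerSeries.coeff_mul, Finset.mul_sum]
  have split : ∀ p ∈ (Finset.HasAntidiagonal.antidiagonal (d + single j 1) :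
        Finset ((Fin n →₀ ℕ) × (Fin n →₀ ℕ))),
      ((d j + 1 : ℕ) : ℂ) * (MvPowerSeries.coeff p.1 f * MvPowerSeries.coeff p.2 g)
        = ((p.1 j : ℕ) : ℂ) * (MvPowerSeries.coeff p.1 f * MvPowerSeries.coeff p.2 g)
          + ((p.2 j : ℕ) : ℂ) * (MvPowerSeries.coeff p.1 f * MvPowerSeries.coeff p.2 g) := by
    rintro ⟨u, v⟩ hp
    simp only [Finset.HasAntidiagonal.mem_antidiagonal] at hp
    have h1 := uj_from u v d j hp
    rw [← add_mul]
    norm_cast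
    rw [h1]
  rw [Finset.sum_congr rfl split, Finset.sum_add_distrib]
  congr 1
  · refine (shift_sum j d (fun u => MvPowerSeries.coeff u f)
      (fun v => MvPowerSeries.coeff v g)).trans (Finset.sum_congr rfl ?_)
    rintro ⟨u, v⟩ _
    rw [coeff_pd]
    ring
  · rw [← Finset.HasAntidiagonal.map_swap_antidiagonal (n := d + single j 1), Finset.sum_map,
      ← Finset.HasAntidiagonal.map_swap_antidiagonal (n := d), Finset.sum_map]
    simp only [Function.Embedding.coeFn_mk, Prod.fst_swap, Prod.snd_swap, coeff_pd]
    refine (Finset.sum_congr rfl ?_).trans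
      ((shift_sum j d (fun u => MvPowerSeries.coeff u g)
        (fun v => MvPowerSeries.coeff v f)).trans (Finset.sum_congr rfl ?_))
    · rintro ⟨u, v⟩ _; ring
    · rintro ⟨u, v⟩ _; ring

lemma pd_one (j : Fin n) : pd j (1 : RR n) = 0 := by
  apply MvPowerSeries.ext; intro d
  rw [coeff_pd, map_zero, MvPowerSeries.coeff_one, if_neg, mul_zero]
  intro h
  have := DFunLike.congr_fun h j
  simp [Finsupp.add_apply, Finsupp.single_eq_same] at this
lemma pd_pow (j : Fin n) (a : RR n) : ∀ r : ℕ, pd j (a ^ (r + 1)) = ((r : ℂ) + 1) • (a ^ r * pd j a)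
  | 0 => by simp
  | (r + 1) => by
    have h0 : a ^ (r + 1 + 1) = a * a ^ (r + 1) := by ring
    rw [h0, pd_mul, pd_pow j a r, mul_smul_comm]
    have h2 : pd j a * a ^ (r + 1) = a ^ (r + 1) * pd j a := mul_comm _ _
    have h3 : a * (a ^ r * pd j a) = a ^ (r + 1) * pd j a := by ring
    rw [h2, h3]
    nth_rewrite 1 [← one_smul (M := ℂ) (b := a ^ (r + 1) * pd j a)]
    rw [← add_smul]
    congr 1
    push_cast
    ring

lemma pd_powC (j : Fin n) (a : RR n) (r : ℕ) :
    pd j (a ^ (r + 1)) = MvPowerSeries.C ((r : ℂ) + 1) * (a ^ r * pd j a) := by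
  rw [pd_pow, ← MvPowerSeries.smul_eq_C_mul]

def VV (m : ℕ) (f : RR n) : Prop := ∀ d, deg d < m → MvPowerSeries.coeff d f = 0

lemma VV_zero (f : RR n) : VV 0 f := fun _ h => absurd h (Nat.not_lt_zero _)

lemma VV_anti {m' m : ℕ} (h : m' ≤ m) {f : RR n} (hf : VV m f) : VV m' f :=
  fun d hd => hf d (lt_of_lt_of_le hd h)

lemma VV_mul {a b : ℕ} {f g : RR n} (hf : VV a f) (hg : VV b g) : VV (a + b) (f * g) := by
  intro d hd
  rw [MvPowerSeries.coeff_mul]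
  apply Finset.sum_eq_zero
  rintro ⟨u, v⟩ hp
  simp only [Finset.HasAntidiagonal.mem_antidiagonal] at hp
  have hdeg : deg u + deg v = deg d := by rw [← deg_add, hp]
  rcases lt_or_ge (deg u) a with h | h
  · rw [hf u h, zero_mul]
  · rw [hg v (by omega), mul_zero]

lemma VV_mul_left {b : ℕ} (f : RR n) {g : RR n} (hg : VV b g) : VV b (f * g) := by
  have := VV_mul (VV_zero f) hg; simpa using this

lemma VV_pow {a : RR n} (ha : VV 1 a) : ∀ r, VV r (a ^ r)
  | 0 => VV_zero _
  | (r + 1) => by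
    rw [pow_succ]
    exact VV_mul (VV_pow ha r) ha

lemma VV_add {m : ℕ} {f g : RR n} (hf : VV m f) (hg : VV m g) : VV m (f + g) := by
  intro d hd; rw [map_add, hf d hd, hg d hd, add_zero]

lemma VV_pd {m : ℕ} {f : RR n} (hf : VV (m + 1) f) (j : Fin n) : VV m (pd j f) := by
  intro d hd
  rw [coeff_pd, hf (d + single j 1) (by rw [deg_add, deg_single]; omega), mul_zero]

lemma VV_one_iff (f : RR n) : VV 1 f ↔ constantCoeff f = 0 := by
  constructor
  · intro h
    rw [← MvPowerSeries.coeff_zero_eq_constantCoeff_apply]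
    exact h 0 (by simp [deg_eq_zero_iff])
  · intro h d hd
    have : d = 0 := by rw [← deg_eq_zero_iff]; omega
    rw [this, MvPowerSeries.coeff_zero_eq_constantCoeff_apply, h]

lemma coeff_X_mul' (d : Fin n →₀ ℕ) (s : Fin n) (φ : RR n) :
    MvPowerSeries.coeff d (MvPowerSeries.X s * φ)
      = if Finsupp.single s 1 ≤ d then MvPowerSeries.coeff (d - Finsupp.single s 1) φ else 0 := by
  rw [MvPowerSeries.X_def, MvPowerSeries.coeff_monomial_mul]
  split <;> simp

noncomputable def Gpart (j : Fin n) (h : RR n) : RR n :=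
  fun e => if ∀ i < j, e i = 0 then MvPowerSeries.coeff (e + Finsupp.single j 1) h else 0

lemma coeff_Gpart (j : Fin n) (h : RR n) (e : Fin n →₀ ℕ) :
    MvPowerSeries.coeff e (Gpart j h)
      = if ∀ i < j, e i = 0 then MvPowerSeries.coeff (e + Finsupp.single j 1) h else 0 := rfl

lemma const_Gpart (j : Fin n) (h : RR n) :
    constantCoeff (Gpart j h) = MvPowerSeries.coeff (Finsupp.single j 1) h := by
  rw [← MvPowerSeries.coeff_zero_eq_constantCoeff_apply, coeff_Gpart, if_pos (by simp), zero_add]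

lemma decomp {h : RR n} (hh : constantCoeff h = 0) :
    h = ∑ j : Fin n, MvPowerSeries.X j * Gpart j h := by
  apply MvPowerSeries.ext; intro d
  rw [map_sum]
  rcases eq_or_ne d 0 with rfl | hd
  · rw [MvPowerSeries.coeff_zero_eq_constantCoeff_apply, hh]
    symm; apply Finset.sum_eq_zero
    intro j _
    rw [coeff_X_mul', if_neg]
    rw [Finsupp.single_le_iff]
    simp
  · have hsupp : d.support.Nonempty := by
      rw [Finsupp.support_nonempty_iff]; exact hd
    set js := d.support.min' hsupp with hjs
    have hjmem : js ∈ d.support := Finset.min'_mem _ _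
    have hdjs : d js ≠ 0 := Finsupp.mem_support_iff.1 hjmem
    rw [Finset.sum_eq_single js]
    · rw [coeff_X_mul', if_pos (by rw [Finsupp.single_le_iff]; omega), coeff_Gpart, if_pos, 
        tsub_add_cancel_of_le (by rw [Finsupp.single_le_iff]; omega)]
      intro i hi
      rw [Finsupp.tsub_apply]
      have : i ∉ d.support := fun hmem => absurd (Finset.min'_le _ _ hmem) (by rw [← hjs]; omega)
      rw [Finsupp.notMem_support_iff.1 this]
      simp
    · intro j _ hj
      rw [coeff_X_mul']
      split
      · rw [coeff_Gpart, if_neg]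
        intro hcond
        apply hj
        have hdj : d j ≠ 0 := by
          rename_i hle
          rw [Finsupp.single_le_iff] at hle; omega
        have hjmem' : j ∈ d.support := Finsupp.mem_support_iff.2 hdj
        have h1 : js ≤ j := Finset.min'_le _ _ hjmem'
        rcases lt_or_eq_of_le h1 with h2 | h2
        · have := hcond js h2
          rw [Finsupp.tsub_apply, Finsupp.single_apply, if_neg (by omega)] at this
          omega
        · exact h2.symm
      · rfl
    · intro hju
      exact absurd (Finset.mem_univ js) hju

lemma mm_const {h : RR n} (hm : h ∈ mm n) : constantCoeff h = 0 := by
  have : mm n ≤ RingHom.ker (constantCoeff) := by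
    rw [mm, Ideal.span_le]
    rintro x ⟨j, rfl⟩
    exact MvPowerSeries.constantCoeff_X j
  exact this hm

lemma mem_mm {h : RR n} (hh : constantCoeff h = 0) : h ∈ mm n := by
  rw [decomp hh]
  apply Ideal.sum_mem
  intro j _
  exact Ideal.mul_mem_right _ _ (Ideal.subset_span ⟨j, rfl⟩)

lemma mem_mm_sq {h : RR n} (h1 : constantCoeff h = 0)
    (h2 : ∀ j, MvPowerSeries.coeff (Finsupp.single j 1) h = 0) : h ∈ mm n ^ 2 := by
  rw [sq, decomp h1]
  apply Ideal.sum_mem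
  intro j _
  exact Ideal.mul_mem_mul (Ideal.subset_span ⟨j, rfl⟩)
    (mem_mm (by rw [const_Gpart]; exact h2 j))

/-- if `u + v` is supported on `{j}` then both are singles. -/
lemma single_split {u v : Fin n →₀ ℕ} {j : Fin n} {m : ℕ} (h : u + v = single j m) :
    u = single j (u j) ∧ v = single j (v j) ∧ u j + v j = m := by
  have hcoord : ∀ i, u i + v i = (single j m : Fin n →₀ ℕ) i := fun i => by
    rw [← Finsupp.add_apply, h]
  refine ⟨?_, ?_, ?_⟩
  · ext i
    rcases eq_or_ne i j with rfl | hne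
    · rw [Finsupp.single_eq_same]
    · have := hcoord i
      rw [Finsupp.single_eq_of_ne hne] at this
      rw [Finsupp.single_eq_of_ne hne]
      omega
  · ext i
    rcases eq_or_ne i j with rfl | hne
    · rw [Finsupp.single_eq_same]
    · have := hcoord i
      rw [Finsupp.single_eq_of_ne hne] at this
      rw [Finsupp.single_eq_of_ne hne]
      omega
  · have := hcoord j
    rw [Finsupp.single_eq_same] at this
    exact this

lemma coeff_pow_single {a : RR n} (ha : constantCoeff a = 0) (j : Fin n) :
    ∀ r, MvPowerSeries.coeff (single j r) (a ^ r)
      = (MvPowerSeries.coeff (single j 1) a) ^ r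
  | 0 => by simp
  | (r + 1) => by
    rw [pow_succ']  -- a^(r+1) = a * a^r
    rw [MvPowerSeries.coeff_mul]
    rw [Finset.sum_eq_single ((single j 1 : Fin n →₀ ℕ), (single j r : Fin n →₀ ℕ))]
    · rw [coeff_pow_single ha j r, pow_succ']
    · rintro ⟨u, v⟩ hp hne
      simp only [Finset.HasAntidiagonal.mem_antidiagonal] at hp
      obtain ⟨hu, hv, hsum⟩ := single_split hp
      rcases Nat.eq_zero_or_pos (u j) with h0 | h1
      · have : u = 0 := by rw [hu, h0, Finsupp.single_zero]
        rw [this, MvPowerSeries.coeff_zero_eq_constantCoeff_apply, ha, zero_mul]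
      · rcases eq_or_lt_of_le (Nat.succ_le_of_lt h1) with h1' | h2
        · exfalso; apply hne
          have hv' : v j = r := by omega
          rw [Prod.mk.injEq, hu, hv, ← h1', hv']
          exact ⟨rfl, rfl⟩
        · have hvj : v j < r := by omega
          have : MvPowerSeries.coeff v (a ^ r) = 0 := by
            apply VV_pow ((VV_one_iff a).2 ha) r
            rw [hv, deg_single]
            exact hvj
          rw [this, mul_zero]
    · intro hmem
      exfalso; apply hmem
      rw [Finset.HasAntidiagonal.mem_antidiagonal, ← Finsupp.single_add, add_comm 1 r]

noncomputable def sumL (L : List (Fin n)) : Fin n →₀ ℕ := (L.map fun j => single j 1).sum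

lemma sumL_nil : sumL ([] : List (Fin n)) = 0 := rfl
lemma sumL_cons (j : Fin n) (L : List (Fin n)) : sumL (j :: L) = single j 1 + sumL L := by
  simp [sumL]

noncomputable def pdL : List (Fin n) → RR n → RR n
  | [], f => f
  | (j :: L), f => pd j (pdL L f)

lemma coeff_pdL (L : List (Fin n)) (f : RR n) :
    ∀ d, ∃ c : ℕ, 0 < c ∧ MvPowerSeries.coeff d (pdL L f)
      = (c : ℂ) * MvPowerSeries.coeff (d + sumL L) f := by
  induction L with
  | nil => intro d; exact ⟨1, by simp [pdL, sumL_nil]⟩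
  | cons j L ih =>
    intro d
    obtain ⟨c, hc, hcoeff⟩ := ih (d + single j 1)
    refine ⟨(d j + 1) * c, by positivity, ?_⟩
    show MvPowerSeries.coeff d (pd j (pdL L f)) = _
    rw [coeff_pd, hcoeff, sumL_cons]
    have : d + single j 1 + sumL L = d + (single j 1 + sumL L) := by rw [add_assoc]
    rw [this]
    push_cast
    ring

lemma exists_list (d : Fin n →₀ ℕ) : ∃ L : List (Fin n), sumL L = d ∧ L.length = deg d := by
  induction d using Finsupp.induction with
  | zero => exact ⟨[], rfl, by rw [(deg_eq_zero_iff (0 : Fin n →₀ ℕ)).2 rfl]; rfl⟩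
  | single_add a b f _ _ ih =>
    obtain ⟨L, hL, hlen⟩ := ih
    refine ⟨List.replicate b a ++ L, ?_, ?_⟩
    · rw [sumL, List.map_append, List.sum_append, List.map_replicate, List.sum_replicate]
      rw [show (single a 1 : Fin n →₀ ℕ) = single a 1 from rfl]
      rw [smul_single, smul_eq_mul, mul_one]
      rw [← sumL, hL]
    · rw [List.length_append, List.length_replicate, hlen, deg_add, deg_single]

lemma iter_div {f a : RR n} (Hdiv : ∀ i, f ∣ a * pd i f) :
    ∀ L : List (Fin n), f ∣ a ^ L.length * pdL L f
  | [] => by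
    show f ∣ a ^ 0 * f
    rw [pow_zero, one_mul]
  | (i :: L) => by
    obtain ⟨w, hw⟩ := iter_div Hdiv L
    set D := pdL L f with hD
    set l := L.length with hl
    have e1 : pd i (a ^ l * D) = pd i (f * w) := by rw [hw]
    rw [pd_mul, pd_mul] at e1
    have key : a ^ (l + 1) * pd i D
        = a * (pd i f * w) + a * (f * pd i w) - a * (pd i (a ^ l) * D) := by
      have : a * (pd i (a ^ l) * D + a ^ l * pd i D) = a * (pd i f * w + f * pd i w) := by
        rw [e1]
      linear_combination this
    have dvd1 : f ∣ a * (pd i f * w) := by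
      obtain ⟨t, ht⟩ := Hdiv i
      exact ⟨t * w, by rw [← mul_assoc, ht]; ring⟩
    have dvd2 : f ∣ a * (f * pd i w) := ⟨a * pd i w, by ring⟩
    have dvd3 : f ∣ a * (pd i (a ^ l) * D) := by
      rcases Nat.eq_zero_or_pos l with h0 | hpos
      · rw [h0, pow_zero, pd_one, zero_mul, mul_zero]
        exact dvd_zero f
      · obtain ⟨s, hs⟩ : ∃ s, l = s + 1 := ⟨l - 1, by omega⟩
        rw [hs, pd_powC]
        refine ⟨MvPowerSeries.C ((s : ℂ) + 1) * (pd i a * w), ?_⟩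
        have : a * (MvPowerSeries.C ((s : ℂ) + 1) * (a ^ s * pd i a) * D)
            = MvPowerSeries.C ((s : ℂ) + 1) * (pd i a * (a ^ (s + 1) * D)) := by
          ring
        rw [this, ← hs, hw]
        ring
    show f ∣ a ^ (L.length + 1) * pd i (pdL L f)
    rw [← hD, ← hl, key]
    exact dvd_sub (dvd_add dvd1 dvd2) dvd3

lemma const_pd (j : Fin n) (f : RR n) :
    constantCoeff (pd j f) = MvPowerSeries.coeff (single j 1) f := by
  rw [← MvPowerSeries.coeff_zero_eq_constantCoeff_apply, coeff_pd]
  simp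

lemma isUnit_of_const {u : RR n} (h : constantCoeff u ≠ 0) : IsUnit u :=
  MvPowerSeries.isUnit_iff_constantCoeff.2 (isUnit_iff_ne_zero.2 h)

lemma const_of_not_isUnit {u : RR n} (h : ¬ IsUnit u) : constantCoeff u = 0 := by
  by_contra h0
  exact h (isUnit_of_const h0)

lemma mmsq_VV2 {f : RR n} (h : f ∈ mm n ^ 2) : VV 2 f := by
  rw [sq] at h
  refine Submodule.mul_induction_on h ?_ ?_
  · intro x hx y hy
    exact VV_mul ((VV_one_iff x).2 (mm_const hx)) ((VV_one_iff y).2 (mm_const hy))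
  · intro x y hx hy
    exact VV_add hx hy

lemma exists_coeff_ne {f : RR n} (hf0 : f ≠ 0) : ∃ d, MvPowerSeries.coeff d f ≠ 0 := by
  by_contra h
  push_neg at h
  exact hf0 (MvPowerSeries.ext fun d => by rw [h d, map_zero])

lemma exists_ord {f : RR n} (hf0 : f ≠ 0) :
    ∃ (m : ℕ) (d₀ : Fin n →₀ ℕ), VV m f ∧ deg d₀ = m ∧ MvPowerSeries.coeff d₀ f ≠ 0 := by
  obtain ⟨d', hd'⟩ := exists_coeff_ne hf0
  have hP : ∃ r, ∃ d, deg d ≤ r ∧ MvPowerSeries.coeff d f ≠ 0 := ⟨deg d', d', le_rfl, hd'⟩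
  classical
  set m := Nat.find hP with hm
  obtain ⟨d₀, hd₀le, hd₀ne⟩ := Nat.find_spec hP
  have hVV : VV m f := by
    intro d hd
    by_contra hne
    exact absurd ⟨d, le_rfl, hne⟩ (Nat.find_min hP (by omega))
  refine ⟨m, d₀, hVV, ?_, hd₀ne⟩
  rcases lt_or_ge (deg d₀) m with h | h
  · exact absurd (hVV d₀ h) hd₀ne
  · omega

lemma deg_one_single {d : Fin n →₀ ℕ} (h : deg d = 1) : ∃ j, d = single j 1 := by
  have hd0 : d ≠ 0 := by
    intro h0
    rw [h0, (deg_eq_zero_iff (0 : Fin n →₀ ℕ)).2 rfl] at h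
    · exact one_ne_zero h.symm
  obtain ⟨j, hj⟩ : ∃ j, d j ≠ 0 := by
    by_contra hc
    push_neg at hc
    exact hd0 (Finsupp.ext hc)
  refine ⟨j, ?_⟩
  have hle := apply_le_deg d j
  have hothers : ∀ i, i ≠ j → d i = 0 := by
    intro i hi
    by_contra hdi
    have h1 : deg d = d j + ∑ x ∈ Finset.univ.erase j, d x := by
      rw [deg, ← Finset.add_sum_erase _ _ (Finset.mem_univ j)]
    have h2 : d i ≤ ∑ x ∈ Finset.univ.erase j, d x :=
      Finset.single_le_sum (f := fun x => d x) (fun _ _ => Nat.zero_le _)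
        (Finset.mem_erase.2 ⟨hi, Finset.mem_univ i⟩)
    omega
  ext i
  rcases eq_or_ne i j with rfl | hne
  · rw [Finsupp.single_eq_same]; omega
  · rw [Finsupp.single_eq_of_ne hne]
    exact hothers i hne

lemma mem_Tj_self (g : RR n) : g ∈ Tj g :=
  Ideal.subset_span (Or.inl rfl)

lemma pd_mem_Tj (g : RR n) (j : Fin n) : pd j g ∈ Tj g :=
  Ideal.subset_span (Or.inr ⟨j, rfl⟩)

lemma mem_Tj_iff (g x : RR n) :
    x ∈ Tj g ↔ ∃ c : Option (Fin n) → RR n,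
      c none * g + ∑ j : Fin n, c (some j) * pd j g = x := by
  have hset : ({g} ∪ Set.range fun j => pd j g : Set (RR n))
      = Set.range (fun o : Option (Fin n) => o.elim g (fun j => pd j g)) := by
    ext y
    simp only [Set.mem_union, Set.mem_singleton_iff, Set.mem_range]
    constructor
    · rintro (rfl | ⟨j, rfl⟩)
      exacts [⟨none, rfl⟩, ⟨some j, rfl⟩]
    · rintro ⟨o, rfl⟩
      cases o with
      | none => exact Or.inl rfl
      | some j => exact Or.inr ⟨j, rfl⟩
  rw [Tj, hset, Ideal.span, Submodule.mem_span_range_iff_exists_fun]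
  refine exists_congr fun c => ?_
  rw [Fintype.sum_option]
  simp only [smul_eq_mul, Option.elim]

theorem main {f : MvPowerSeries (Fin n) ℂ}
    (hfm : f ∈ mm n) (hf : Irreducible f) (k : ℕ) (hk : 1 ≤ k) :
    (∃ g : MvPowerSeries (Fin n) ℂ, Ideal.span {f ^ k} = Tj g) ↔ f ∉ mm n ^ 2 := by
  have hf0 : f ≠ 0 := hf.ne_zero
  obtain ⟨k', rfl⟩ : ∃ k', k = k' + 1 := ⟨k - 1, by omega⟩
  constructor
  · rintro ⟨g, hfk⟩ hmem
    -- the hard direction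
    have hVV2 : VV 2 f := mmsq_VV2 hmem
    obtain ⟨m, d₀, hVVm, hdeg₀, hne₀⟩ := exists_ord hf0
    have hm2 : 2 ≤ m := by
      by_contra h
      exact hne₀ (hVV2 d₀ (by omega))
    obtain ⟨m', rfl⟩ : ∃ m', m = m' + 2 := ⟨m - 2, by omega⟩
    -- g = a * f^k
    obtain ⟨a, hga⟩ : ∃ a, a * f ^ (k' + 1) = g :=
      Ideal.mem_span_singleton'.1 (hfk ▸ mem_Tj_self g)
    -- pd i g = h i * f^k
    have hpd : ∀ i, ∃ h, h * f ^ (k' + 1) = pd i g := fun i =>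
      Ideal.mem_span_singleton'.1 (hfk ▸ pd_mem_Tj g i)
    choose h hh using hpd
    -- key identity
    have key : ∀ i, MvPowerSeries.C ((k' : ℂ) + 1) * (a * pd i f)
        = (h i - pd i a) * f := by
      intro i
      have e1 : pd i (a * f ^ (k' + 1)) = h i * f ^ (k' + 1) := by rw [hga, hh i]
      rw [pd_mul, pd_powC] at e1
      have e2 : (MvPowerSeries.C ((k' : ℂ) + 1) * (a * pd i f)) * f ^ k'
          = ((h i - pd i a) * f) * f ^ k' := by
        have hfp : f ^ (k' + 1) = f * f ^ k' := by ring
        rw [hfp] at e1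
        linear_combination e1
      exact mul_right_cancel₀ (pow_ne_zero k' hf0) e2
    have hCC : (MvPowerSeries.C (((k' : ℂ) + 1)⁻¹) : RR n)
        * MvPowerSeries.C ((k' : ℂ) + 1) = 1 := by
      rw [← map_mul, inv_mul_cancel₀ (by exact_mod_cast Nat.succ_ne_zero k'), map_one]
    have Hdiv : ∀ i, f ∣ a * pd i f := by
      intro i
      have e3 : MvPowerSeries.C (((k' : ℂ) + 1)⁻¹)
          * (MvPowerSeries.C ((k' : ℂ) + 1) * (a * pd i f))
          = MvPowerSeries.C (((k' : ℂ) + 1)⁻¹) * ((h i - pd i a) * f) := by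
        rw [key i]
      rw [← mul_assoc, hCC, one_mul] at e3
      exact ⟨MvPowerSeries.C (((k' : ℂ) + 1)⁻¹) * (h i - pd i a), by rw [e3]; ring⟩
    -- a is not a unit
    have hna : ¬ IsUnit a := by
      intro ha
      obtain ⟨A, hA⟩ := ha
      obtain ⟨j, hj⟩ : ∃ j, d₀ j ≠ 0 := by
        by_contra hc
        push_neg at hc
        have : d₀ = 0 := Finsupp.ext hc
        rw [this, (deg_eq_zero_iff (0 : Fin n →₀ ℕ)).2 rfl] at hdeg₀
        omega
      obtain ⟨c, hc⟩ := Hdiv j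
      have hpdj : pd j f = f * ((↑A⁻¹ : RR n) * c) := by
        have : (↑A⁻¹ : RR n) * (a * pd j f) = (↑A⁻¹ : RR n) * (f * c) := by rw [hc]
        rw [← mul_assoc, ← hA, Units.inv_mul, one_mul] at this
        rw [this]; ring
      have hVVpd : VV (m' + 2) (pd j f) := by
        rw [hpdj]
        have := VV_mul hVVm (VV_zero ((↑A⁻¹ : RR n) * c))
        simpa using this
      have hcoeff : MvPowerSeries.coeff (d₀ - single j 1) (pd j f) ≠ 0 := by
        rw [coeff_pd, sub_single_add_cancel d₀ j hj]
        have h4 := sub_single_apply_same d₀ j hj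
        intro hzero
        rcases mul_eq_zero.1 hzero with h5 | h5
        · have : ((d₀ - single j 1 : Fin n →₀ ℕ) j + 1 : ℕ) ≠ 0 := by omega
          exact this (by exact_mod_cast h5)
        · exact hne₀ h5
      apply hcoeff
      apply hVVpd
      have : deg d₀ = deg (d₀ - single j 1) + 1 := by
        conv_lhs => rw [← sub_single_add_cancel d₀ j hj]
        rw [deg_add, deg_single]
      omega
    have hconsta : constantCoeff a = 0 := const_of_not_isUnit hna
    -- representation of f^k in Tj g
    obtain ⟨c, hc⟩ := (mem_Tj_iff g (f ^ (k' + 1))).1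
      (hfk ▸ Ideal.subset_span (Set.mem_singleton _))
    have E : c none * a + ∑ j : Fin n, c (some j) * h j = 1 := by
      apply mul_right_cancel₀ (pow_ne_zero (k' + 1) hf0)
      rw [one_mul]
      calc (c none * a + ∑ j : Fin n, c (some j) * h j) * f ^ (k' + 1)
          = c none * (a * f ^ (k' + 1)) + ∑ j : Fin n, c (some j) * (h j * f ^ (k' + 1)) := by
            rw [add_mul, Finset.sum_mul]
            congr 1
            · ring
            · exact Finset.sum_congr rfl fun j _ => by ring
        _ = c none * g + ∑ j : Fin n, c (some j) * pd j g := by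
            rw [hga]
            congr 1
            exact Finset.sum_congr rfl fun j _ => by rw [hh j]
        _ = f ^ (k' + 1) := hc
    obtain ⟨j₀, hj₀⟩ : ∃ j₀, constantCoeff (h j₀) ≠ 0 := by
      by_contra hall
      push_neg at hall
      have := congrArg (constantCoeff) E
      rw [map_add, map_mul, hconsta, mul_zero, map_sum, map_one] at this
      rw [Finset.sum_eq_zero (fun j _ => by rw [map_mul, hall j, mul_zero])] at this
      simp at this
    -- a has order exactly one
    have hnVV2a : ¬ VV 2 a := by
      intro hVV2a
      have hconstpda : constantCoeff (pd j₀ a) = 0 := by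
        rw [const_pd]
        exact hVV2a (single j₀ 1) (by rw [deg_single]; omega)
      have hw : IsUnit (h j₀ - pd j₀ a) := by
        apply isUnit_of_const
        rw [map_sub, hconstpda, sub_zero]
        exact hj₀
      obtain ⟨W, hW⟩ := hw
      have hfeq : f = (↑W⁻¹ : RR n) * (MvPowerSeries.C ((k' : ℂ) + 1)
          * (a * pd j₀ f)) := by
        rw [key j₀, ← hW, ← mul_assoc, Units.inv_mul, one_mul]
      have hVVf : VV (m' + 3) f := by
        rw [hfeq]
        apply VV_mul_left
        apply VV_mul_left
        have := VV_mul hVV2a (VV_pd hVVm j₀)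
        rw [show m' + 3 = 2 + (m' + 1) by omega]
        exact this
      exact hne₀ (hVVf d₀ (by omega))
    obtain ⟨d₁, hd₁deg, hd₁ne⟩ : ∃ d₁, deg d₁ < 2 ∧ MvPowerSeries.coeff d₁ a ≠ 0 := by
      by_contra hcon
      push_neg at hcon
      exact hnVV2a fun d hd => hcon d hd
    have hd₁ : deg d₁ = 1 := by
      have hd2 : deg d₁ = 0 ∨ deg d₁ = 1 := by omega
      rcases hd2 with h0 | h1
      · exfalso
        have : d₁ = 0 := (deg_eq_zero_iff d₁).1 h0
        rw [this, MvPowerSeries.coeff_zero_eq_constantCoeff_apply, hconsta] at hd₁ne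
        exact hd₁ne rfl
      · exact h1
    obtain ⟨j₁, rfl⟩ := deg_one_single hd₁
    -- iterated derivatives
    obtain ⟨L, hLsum, hLlen⟩ := exists_list d₀
    obtain ⟨t, ht⟩ := iter_div Hdiv L
    rw [hLlen, hdeg₀] at ht
    -- constant coefficient of pdL L f
    obtain ⟨cc, hccpos, hcc⟩ := coeff_pdL L f 0
    rw [zero_add, hLsum] at hcc
    have hconstW : constantCoeff (pdL L f) ≠ 0 := by
      rw [← MvPowerSeries.coeff_zero_eq_constantCoeff_apply, hcc]
      exact mul_ne_zero (Nat.cast_ne_zero.2 (by omega)) hne₀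
    -- t is a unit
    have hVV1a : VV 1 a := (VV_one_iff a).2 hconsta
    have hcoeffprod : MvPowerSeries.coeff (single j₁ (m' + 2)) (a ^ (m' + 2) * pdL L f) ≠ 0 := by
      rw [MvPowerSeries.coeff_mul]
      rw [Finset.sum_eq_single ((single j₁ (m' + 2) : Fin n →₀ ℕ), (0 : Fin n →₀ ℕ))]
      · rw [coeff_pow_single hconsta j₁ (m' + 2),
          MvPowerSeries.coeff_zero_eq_constantCoeff_apply]
        exact mul_ne_zero (pow_ne_zero _ hd₁ne) hconstW
      · rintro ⟨u, v⟩ hp hne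
        simp only [Finset.HasAntidiagonal.mem_antidiagonal] at hp
        obtain ⟨hu, hv, hsum⟩ := single_split hp
        rcases Nat.eq_zero_or_pos (v j₁) with h0 | h1
        · exfalso
          apply hne
          have : v = 0 := by rw [hv, h0, Finsupp.single_zero]
          rw [Prod.mk.injEq, this, hu]
          constructor
          · rw [show u j₁ = m' + 2 by omega]
          · rfl
        · have : MvPowerSeries.coeff u (a ^ (m' + 2)) = 0 := by
            apply VV_pow hVV1a
            rw [hu, deg_single]
            omega
          rw [this, zero_mul]
      · intro hmem2
        exact absurd (Finset.HasAntidiagonal.mem_antidiagonal.2 (add_zero _)) hmem2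
    have hut : IsUnit t := by
      apply isUnit_of_const
      intro hconstt
      apply hcoeffprod
      rw [ht]
      have hVVft : VV ((m' + 2) + 1) (f * t) := VV_mul hVVm ((VV_one_iff t).2 hconstt)
      apply hVVft
      rw [deg_single]
      omega
    obtain ⟨T, hT⟩ := hut
    -- factorization of f
    have hfact : f = ((↑T⁻¹ : RR n) * a ^ (m' + 1) * pdL L f) * a :=
      calc f = f * ((↑T⁻¹ : RR n) * ↑T) := by rw [Units.inv_mul, mul_one]
        _ = (↑T⁻¹ : RR n) * (f * t) := by rw [hT]; ring
        _ = (↑T⁻¹ : RR n) * (a ^ (m' + 2) * pdL L f) := by rw [ht]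
        _ = ((↑T⁻¹ : RR n) * a ^ (m' + 1) * pdL L f) * a := by ring
    rcases hf.isUnit_or_isUnit hfact with hu | hu
    · -- first factor is not a unit
      have : constantCoeff ((↑T⁻¹ : RR n) * a ^ (m' + 1) * pdL L f) = 0 := by
        rw [map_mul, map_mul, map_pow, hconsta]
        rw [zero_pow (by omega), mul_zero, zero_mul]
      have h8 := MvPowerSeries.isUnit_iff_constantCoeff.1 hu
      rw [this] at h8
      exact (isUnit_iff_ne_zero.1 h8) rfl
    · exact hna hu
  · -- the easy direction
    intro hns
    have hconstf : constantCoeff f = 0 := mm_const hfm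
    obtain ⟨j₀, hj₀⟩ : ∃ j₀, MvPowerSeries.coeff (single j₀ 1) f ≠ 0 := by
      by_contra hall
      push_neg at hall
      exact hns (mem_mm_sq hconstf hall)
    refine ⟨f ^ (k' + 2), le_antisymm ?_ ?_⟩
    · rw [Ideal.span_le, Set.singleton_subset_iff]
      have hu : IsUnit (MvPowerSeries.C ((k' + 1 : ℂ) + 1) * pd j₀ f) := by
        apply isUnit_of_const
        rw [map_mul, MvPowerSeries.constantCoeff_C, const_pd]
        apply mul_ne_zero _ hj₀
        exact_mod_cast Nat.succ_ne_zero (k' + 1)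
      obtain ⟨U, hU⟩ := hu
      have hpdg : pd j₀ (f ^ (k' + 2)) = ↑U * f ^ (k' + 1) := by
        rw [show k' + 2 = (k' + 1) + 1 from rfl, pd_powC, hU]
        push_cast
        ring
      have : f ^ (k' + 1) = (↑U⁻¹ : RR n) * pd j₀ (f ^ (k' + 2)) := by
        rw [hpdg, ← mul_assoc, Units.inv_mul, one_mul]
      rw [this]
      exact Ideal.mul_mem_left _ _ (pd_mem_Tj _ j₀)
    · rw [Tj, Ideal.span_le]
      rintro x (hx | ⟨j, rfl⟩)
      · rw [Set.mem_singleton_iff] at hx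
        subst hx
        exact Ideal.mem_span_singleton'.2 ⟨f, by ring⟩
      · show pd j (f ^ (k' + 2)) ∈ (Ideal.span {f ^ (k' + 1)} : Ideal (RR n))
        rw [show k' + 2 = (k' + 1) + 1 from rfl, pd_powC]
        exact Ideal.mem_span_singleton'.2
          ⟨MvPowerSeries.C ((k' + 1 : ℂ) + 1) * pd j f, by push_cast; ring⟩

end Stmt12


/-- for `n ≥ 2`, `f ∈ 𝔪` irreducible and `k ≥ 1`, the ideal `(f^k)` is a
Tjurina ideal iff `f` has multiplicity one, i.e. `f ∉ 𝔪²`. -/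
theorem stmt_12 {n : ℕ} (hn : 2 ≤ n) (f : MvPowerSeries (Fin n) ℂ)
    (hfm : f ∈ mm n) (hf : Irreducible f) (k : ℕ) (hk : 1 ≤ k) :
    (∃ g : MvPowerSeries (Fin n) ℂ, Ideal.span {f ^ k} = Tj g) ↔ f ∉ mm n ^ 2 := by
  exact Stmt12.main hfm hf k hk
end

section
/- Let n ≥ 2 and let f = f₁^{k₁}⋯f_r^{k_r} ∈ R with r ≥ 2, where f₁,…,f_r are pairwise non-associated irreducible elements and k₁,…,k_r ≥ 1. Then the principal ideal (f) is not a Tjurina ideal. -/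
namespace Stmt13Aux

open MvPowerSeries Finset

variable {n : ℕ}

local notation "R" => MvPowerSeries (Fin n) ℂ

noncomputable abbrev cc (w : MvPowerSeries (Fin n) ℂ) : ℂ := constantCoeff w

lemma coeff_pd (j : Fin n) (f : R) (d : Fin n →₀ ℕ) :
    coeff d (pd j f) = ((d j + 1 : ℕ) : ℂ) * coeff (d + Finsupp.single j 1) f := rfl

lemma pd_zero (j : Fin n) : pd j (0 : R) = 0 := by
  ext d
  rw [coeff_pd, map_zero, map_zero, mul_zero]

lemma deg_add (a b : Fin n →₀ ℕ) :
    Finsupp.degree (a + b) = Finsupp.degree a + Finsupp.degree b := by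
  simp [Finsupp.degree_eq_weight_one, map_add]

lemma deg_single (j : Fin n) : Finsupp.degree (Finsupp.single j 1) = 1 := by
  exact Finsupp.degree_single j 1

lemma unit_iff (w : R) : IsUnit w ↔ cc w ≠ 0 := by
  rw [MvPowerSeries.isUnit_iff_constantCoeff, isUnit_iff_ne_zero]

lemma order_finite (u : R) (hu : u ≠ 0) : ∃ N : ℕ, u.order = N := by
  have h : u.order ≠ ⊤ := by simpa using hu
  obtain ⟨N, hN⟩ := WithTop.ne_top_iff_exists.mp h
  exact ⟨N, hN.symm⟩

lemma sum_shift_left (d e : Fin n →₀ ℕ) (G : (Fin n →₀ ℕ) → (Fin n →₀ ℕ) → ℂ) :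
    ∑ p ∈ antidiagonal d, G (p.1 + e) p.2
      = ∑ p ∈ (antidiagonal (d + e)).filter (fun p => e ≤ p.1), G p.1 p.2 := by
  classical
  apply Finset.sum_nbij' (i := fun p => (p.1 + e, p.2)) (j := fun p => (p.1 - e, p.2))
  · intro p hp
    rw [HasAntidiagonal.mem_antidiagonal] at hp
    rw [mem_filter, HasAntidiagonal.mem_antidiagonal]
    refine ⟨?_, self_le_add_left e p.1⟩
    rw [← hp]; simp; abel
  · intro p hp
    rw [mem_filter, HasAntidiagonal.mem_antidiagonal] at hp
    rw [HasAntidiagonal.mem_antidiagonal, tsub_add_eq_add_tsub hp.2, hp.1, add_tsub_cancel_right]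
  · intro p hp; simp [add_tsub_cancel_right]
  · intro p hp; rw [mem_filter] at hp; simp [tsub_add_cancel_of_le hp.2]
  · intro p hp; rfl

lemma sum_shift_right (d e : Fin n →₀ ℕ) (G : (Fin n →₀ ℕ) → (Fin n →₀ ℕ) → ℂ) :
    ∑ p ∈ antidiagonal d, G p.1 (p.2 + e)
      = ∑ p ∈ (antidiagonal (d + e)).filter (fun p => e ≤ p.2), G p.1 p.2 := by
  classical
  apply Finset.sum_nbij' (i := fun p => (p.1, p.2 + e)) (j := fun p => (p.1, p.2 - e))
  · intro p hp
    rw [HasAntidiagonal.mem_antidiagonal] at hp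
    rw [mem_filter, HasAntidiagonal.mem_antidiagonal]
    refine ⟨?_, self_le_add_left e p.2⟩
    rw [← hp]; simp; abel
  · intro p hp
    rw [mem_filter, HasAntidiagonal.mem_antidiagonal] at hp
    rw [HasAntidiagonal.mem_antidiagonal, ← add_tsub_assoc_of_le hp.2, hp.1, add_tsub_cancel_right]
  · intro p hp; simp [add_tsub_cancel_right]
  · intro p hp; rw [mem_filter] at hp; simp [tsub_add_cancel_of_le hp.2]
  · intro p hp; rfl

lemma pd_mul (j : Fin n) (u v : R) :
    pd j (u * v) = pd j u * v + u * pd j v := by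
  classical
  ext d
  rw [map_add, coeff_mul, coeff_mul]
  show ((d j + 1 : ℕ) : ℂ) * coeff (d + Finsupp.single j 1) (u*v) = _
  rw [coeff_mul, Finset.mul_sum]
  have key : ∀ p ∈ antidiagonal (d + Finsupp.single j 1),
      ((d j + 1 : ℕ) : ℂ) * (coeff p.1 u * coeff p.2 v)
        = (((p.1 : Fin n →₀ ℕ) j : ℕ) : ℂ) * (coeff p.1 u * coeff p.2 v)
          + (((p.2 : Fin n →₀ ℕ) j : ℕ) : ℂ) * (coeff p.1 u * coeff p.2 v) := by
    intro p hp
    rw [HasAntidiagonal.mem_antidiagonal] at hp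
    have : p.1 j + p.2 j = d j + 1 := by
      have := DFunLike.congr_fun hp j
      simpa [Finsupp.add_apply] using this
    rw [← add_mul, ← Nat.cast_add, this]
  rw [Finset.sum_congr rfl key, Finset.sum_add_distrib]
  congr 1
  · -- first piece equals ∑ over antidiagonal d of coeff (pd j u) * coeff v
    have h1 : ∑ p ∈ antidiagonal (d + Finsupp.single j 1),
        (((p.1 : Fin n →₀ ℕ) j : ℕ) : ℂ) * (coeff p.1 u * coeff p.2 v)
        = ∑ p ∈ (antidiagonal (d + Finsupp.single j 1)).filter
            (fun p => Finsupp.single j 1 ≤ p.1),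
            (((p.1 : Fin n →₀ ℕ) j : ℕ) : ℂ) * (coeff p.1 u * coeff p.2 v) := by
      refine (Finset.sum_filter_of_ne ?_).symm
      intro p _ hne
      rw [Finsupp.single_le_iff]
      rcases Nat.eq_zero_or_pos (p.1 j) with h|h
      · exact absurd (by simp [h]) hne
      · exact h
    rw [h1, ← sum_shift_left d (Finsupp.single j 1)
      (fun a b => ((a j : ℕ) : ℂ) * (coeff a u * coeff b v))]
    apply Finset.sum_congr rfl
    intro p _
    rw [coeff_pd, Finsupp.add_apply, Finsupp.single_eq_same, ← mul_assoc]
  · have h1 : ∑ p ∈ antidiagonal (d + Finsupp.single j 1),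
        (((p.2 : Fin n →₀ ℕ) j : ℕ) : ℂ) * (coeff p.1 u * coeff p.2 v)
        = ∑ p ∈ (antidiagonal (d + Finsupp.single j 1)).filter
            (fun p => Finsupp.single j 1 ≤ p.2),
            (((p.2 : Fin n →₀ ℕ) j : ℕ) : ℂ) * (coeff p.1 u * coeff p.2 v) := by
      refine (Finset.sum_filter_of_ne ?_).symm
      intro p _ hne
      rw [Finsupp.single_le_iff]
      rcases Nat.eq_zero_or_pos (p.2 j) with h|h
      · exact absurd (by simp [h]) hne
      · exact h
    rw [h1, ← sum_shift_right d (Finsupp.single j 1)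
      (fun a b => ((b j : ℕ) : ℂ) * (coeff a u * coeff b v))]
    apply Finset.sum_congr rfl
    intro p _
    rw [coeff_pd, Finsupp.add_apply, Finsupp.single_eq_same]
    ring

section WeierstrassDegreeOne

/-- "restriction": kill all monomials containing `xⱼ`. -/
noncomputable def opR (j : Fin n) (w : MvPowerSeries (Fin n) ℂ) : MvPowerSeries (Fin n) ℂ :=
  fun d => if d j = 0 then MvPowerSeries.coeff d w else 0

/-- "shift": shift the coefficients in the direction `xⱼ`. -/
noncomputable def opT (j : Fin n) (w : MvPowerSeries (Fin n) ℂ) : MvPowerSeries (Fin n) ℂ :=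
  fun d => MvPowerSeries.coeff (d + Finsupp.single j 1) w

lemma coeff_opR (j : Fin n) (w : R) (d : Fin n →₀ ℕ) :
    coeff d (opR j w) = if d j = 0 then coeff d w else 0 := rfl

lemma coeff_opT (j : Fin n) (w : R) (d : Fin n →₀ ℕ) :
    coeff d (opT j w) = coeff (d + Finsupp.single j 1) w := rfl

lemma opT_add (j : Fin n) (u v : R) : opT j (u + v) = opT j u + opT j v := by
  ext d; simp only [map_add, coeff_opT]

lemma opT_sub (j : Fin n) (u v : R) : opT j (u - v) = opT j u - opT j v := by
  ext d; simp only [map_sub, coeff_opT]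

lemma opT_zero (j : Fin n) : opT j (0 : R) = 0 := by
  ext d; simp only [coeff_opT, map_zero]

lemma opR_mul (j : Fin n) (u v : R) : opR j (u * v) = opR j u * opR j v := by
  classical
  ext d
  rw [coeff_opR, coeff_mul, coeff_mul]
  by_cases h : d j = 0
  · rw [if_pos h]
    apply Finset.sum_congr rfl
    intro p hp
    rw [HasAntidiagonal.mem_antidiagonal] at hp
    have hj : p.1 j + p.2 j = 0 := by
      have := DFunLike.congr_fun hp j
      simpa [h] using this
    rw [coeff_opR, coeff_opR, if_pos (by omega : p.1 j = 0), if_pos (by omega : p.2 j = 0)]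
  · rw [if_neg h]
    symm
    apply Finset.sum_eq_zero
    intro p hp
    rw [HasAntidiagonal.mem_antidiagonal] at hp
    have hj : p.1 j + p.2 j = d j := by
      have := DFunLike.congr_fun hp j
      simpa using this
    rcases Nat.eq_zero_or_pos (p.1 j) with h1|h1
    · rw [coeff_opR j v, if_neg (by omega : ¬ p.2 j = 0), mul_zero]
    · rw [coeff_opR j u, if_neg (by omega : ¬ p.1 j = 0), zero_mul]

lemma opT_mul (j : Fin n) (u v : R) :
    opT j (u * v) = u * opT j v + opT j u * opR j v := by
  classical
  ext d
  rw [map_add, coeff_opT, coeff_mul, coeff_mul, coeff_mul]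
  rw [← Finset.sum_filter_add_sum_filter_not (antidiagonal (d + Finsupp.single j 1))
    (fun p => Finsupp.single j 1 ≤ p.2)]
  congr 1
  · rw [← sum_shift_right d (Finsupp.single j 1)
      (fun x y => coeff x u * coeff y v)]
    apply Finset.sum_congr rfl
    intro p _
    rw [coeff_opT]
  · have step1 : ∑ p ∈ (antidiagonal (d + Finsupp.single j 1)).filter
        (fun p => ¬ Finsupp.single j 1 ≤ p.2), coeff p.1 u * coeff p.2 v
        = ∑ p ∈ antidiagonal (d + Finsupp.single j 1), coeff p.1 u * coeff p.2 (opR j v) := by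
      rw [Finset.sum_filter]
      apply Finset.sum_congr rfl
      intro p hp
      rw [HasAntidiagonal.mem_antidiagonal] at hp
      have hdj : p.1 j + p.2 j = d j + 1 := by
        have := DFunLike.congr_fun hp j
        simpa using this
      rw [coeff_opR]
      by_cases h2 : p.2 j = 0
      · rw [if_pos (by rw [Finsupp.single_le_iff]; omega), if_pos h2]
      · rw [if_neg (fun hh => hh (Finsupp.single_le_iff.mpr (by omega))), if_neg h2, mul_zero]
    have step2 : ∑ p ∈ antidiagonal (d + Finsupp.single j 1),
        coeff p.1 u * coeff p.2 (opR j v)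
        = ∑ p ∈ (antidiagonal (d + Finsupp.single j 1)).filter
            (fun p => Finsupp.single j 1 ≤ p.1), coeff p.1 u * coeff p.2 (opR j v) := by
      refine (Finset.sum_filter_of_ne ?_).symm
      intro p hp hne
      rw [HasAntidiagonal.mem_antidiagonal] at hp
      have hdj : p.1 j + p.2 j = d j + 1 := by
        have := DFunLike.congr_fun hp j
        simpa using this
      rw [Finsupp.single_le_iff]
      by_contra hcon
      push_neg at hcon
      apply hne
      rw [coeff_opR, if_neg (by omega : ¬ p.2 j = 0), mul_zero]
    rw [step1, step2, ← sum_shift_left d (Finsupp.single j 1)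
      (fun x y => coeff x u * coeff y (opR j v))]
    apply Finset.sum_congr rfl
    intro p _
    rw [coeff_opT]

/-- order in the variables other than j is `≥ k` -/
def Ok (j : Fin n) (k : ℕ) (w : MvPowerSeries (Fin n) ℂ) : Prop :=
  ∀ d : Fin n →₀ ℕ, Finsupp.degree (d.erase j) < k → coeff d w = 0

lemma deg'_add (j : Fin n) (a b : Fin n →₀ ℕ) :
    Finsupp.degree ((a + b).erase j)
      = Finsupp.degree (a.erase j) + Finsupp.degree (b.erase j) := by
  rw [Finsupp.erase_add, deg_add]

lemma deg'_single (j : Fin n) (d : Fin n →₀ ℕ) :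
    Finsupp.degree ((d + Finsupp.single j 1).erase j) = Finsupp.degree (d.erase j) := by
  rw [Finsupp.erase_add]
  simp

lemma Ok_zero (j : Fin n) (w : R) : Ok j 0 w := fun _ hd => absurd hd (Nat.not_lt_zero _)

lemma Ok_mono (j : Fin n) {k k' : ℕ} (hk : k' ≤ k) {w : R} (h : Ok j k w) : Ok j k' w :=
  fun d hd => h d (lt_of_lt_of_le hd hk)

lemma Ok_mul (j : Fin n) {k₁ k₂ : ℕ} {u v : R} (hu : Ok j k₁ u) (hv : Ok j k₂ v) :
    Ok j (k₁ + k₂) (u * v) := by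
  intro d hd
  rw [coeff_mul]
  apply Finset.sum_eq_zero
  intro p hp
  rw [HasAntidiagonal.mem_antidiagonal] at hp
  have hdeg : Finsupp.degree (p.1.erase j) + Finsupp.degree (p.2.erase j)
      = Finsupp.degree (d.erase j) := by
    rw [← deg'_add, hp]
  rcases Nat.lt_or_ge (Finsupp.degree (p.1.erase j)) k₁ with h|h
  · rw [hu p.1 h, zero_mul]
  · rw [hv p.2 (by omega), mul_zero]

lemma Ok_T (j : Fin n) {k : ℕ} {w : R} (h : Ok j k w) : Ok j k (opT j w) := by
  intro d hd
  rw [coeff_opT]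
  exact h _ (by rwa [deg'_single])

lemma Ok_neg (j : Fin n) {k : ℕ} {w : R} (h : Ok j k w) : Ok j k (-w) := by
  intro d hd; rw [map_neg, h d hd, neg_zero]

lemma eq_zero_of_Ok (j : Fin n) (w : R) (h : ∀ k, Ok j k w) : w = 0 := by
  ext d
  rw [map_zero]
  exact h (Finsupp.degree (d.erase j) + 1) d (Nat.lt_succ_self _)

lemma Ok_c (j : Fin n) (p : R) (h0 : cc p = 0) : Ok j 1 (opR j p) := by
  intro d hd
  rw [coeff_opR]
  by_cases h : d j = 0
  · rw [if_pos h]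
    have hd0 : d = 0 := by
      have h1 : d.erase j = d := by
        ext i
        by_cases hij : i = j
        · subst hij; rw [Finsupp.erase_same, h]
        · rw [Finsupp.erase_ne hij]
      rw [h1] at hd
      exact (Finsupp.degree_eq_zero_iff d).mp (Nat.lt_one_iff.mp hd)
    rw [hd0]
    exact h0
  · rw [if_neg h]

/-- Weierstrass division, degree 1 case: existence. -/
lemma weier_div (j : Fin n) (p : R) (hT : IsUnit (opT j p)) (h0 : cc p = 0) (w : R) :
    ∃ q s : R, w = q * p + s ∧ opT j s = 0 := by
  classical
  obtain ⟨u, hu⟩ := hT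
  have hOkc : Ok j 1 (opR j p) := Ok_c j p h0
  set c : MvPowerSeries (Fin n) ℂ := opR j p with hc
  set seq : ℕ → MvPowerSeries (Fin n) ℂ := fun m =>
    Nat.rec 0 (fun _ qm => (↑u⁻¹ : R) * opT j w - ↑u⁻¹ * (c * opT j qm)) m with hseq
  have seq_succ : ∀ m, seq (m+1) = (↑u⁻¹ : R) * opT j w - ↑u⁻¹ * (c * opT j (seq m)) :=
    fun m => rfl
  have hMstep : ∀ (k : ℕ) (x : R), Ok j k x → Ok j (k+1) ((↑u⁻¹ : R) * (c * opT j x)) := by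
    intro k x hx
    have h1 : Ok j (1 + k) (c * opT j x) := Ok_mul j hOkc (Ok_T j hx)
    have h2 : Ok j (0 + (1 + k)) ((↑u⁻¹ : R) * (c * opT j x)) :=
      Ok_mul j (Ok_zero j ((↑u⁻¹ : R))) h1
    exact Ok_mono j (by omega) h2
  have hdiff : ∀ m, Ok j m (seq (m+1) - seq m) := by
    intro m
    induction m with
    | zero => exact Ok_zero j _
    | succ m ih =>
      have heq : seq (m+1+1) - seq (m+1)
          = (↑u⁻¹ : R) * (c * (opT j (seq m) - opT j (seq (m+1)))) := by
        rw [seq_succ (m+1)]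
        nth_rewrite 2 [seq_succ m]
        ring
      have hsplit : opT j (seq m) - opT j (seq (m+1)) = opT j (seq m - seq (m+1)) :=
        (opT_sub j _ _).symm
      rw [hsplit] at heq
      rw [heq]
      have hneg : Ok j m (seq m - seq (m+1)) := by
        have := Ok_neg j ih
        simpa [neg_sub] using this
      exact hMstep m _ hneg
  have stab : ∀ (d : Fin n →₀ ℕ) (m : ℕ), Finsupp.degree (d.erase j) < m →
      coeff d (seq m) = coeff d (seq (Finsupp.degree (d.erase j) + 1)) := by
    intro d m
    induction m with
    | zero => omega
    | succ m ih =>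
      intro hm
      rcases Nat.lt_or_ge (Finsupp.degree (d.erase j)) m with h|h
      · rw [← ih h]
        have h2 := hdiff m d h
        rw [map_sub, sub_eq_zero] at h2
        exact h2
      · have hDm : Finsupp.degree (d.erase j) = m := by omega
        rw [hDm]
  set qq : MvPowerSeries (Fin n) ℂ :=
    (fun d => coeff d (seq (Finsupp.degree (d.erase j) + 1))) with hqqdef
  have coeff_qq : ∀ d, coeff d qq = coeff d (seq (Finsupp.degree (d.erase j) + 1)) :=
    fun _ => rfl
  have qq_minus : ∀ m, Ok j m (qq - seq m) := by
    intro m d hd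
    rw [map_sub, coeff_qq, ← stab d m hd, sub_self]
  have fix : (↑u : R) * qq = opT j w - c * opT j qq := by
    have fix0 : qq = (↑u⁻¹ : R) * opT j w - ↑u⁻¹ * (c * opT j qq) := by
      ext d
      rw [coeff_qq, seq_succ, map_sub, map_sub]
      congr 1
      have heq : (↑u⁻¹ : R) * (c * opT j qq)
          - ↑u⁻¹ * (c * opT j (seq (Finsupp.degree (d.erase j))))
          = ↑u⁻¹ * (c * opT j (qq - seq (Finsupp.degree (d.erase j)))) := by
        rw [opT_sub]
        ring
      have hOk := hMstep _ _ (qq_minus (Finsupp.degree (d.erase j)))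
      rw [← heq] at hOk
      have h3 := hOk d (by omega)
      rw [map_sub, sub_eq_zero] at h3
      exact h3.symm
    calc (↑u : R) * qq
        = (↑u : R) * ((↑u⁻¹ : R) * opT j w - ↑u⁻¹ * (c * opT j qq)) := by rw [← fix0]
      _ = ((↑u : R) * ↑u⁻¹) * opT j w - ((↑u : R) * ↑u⁻¹) * (c * opT j qq) := by ring
      _ = opT j w - c * opT j qq := by rw [Units.mul_inv, one_mul, one_mul]
  refine ⟨qq, w - qq * p, by ring, ?_⟩
  rw [opT_sub, opT_mul, ← hu, ← hc]
  linear_combination -fix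

/-- Weierstrass division, degree 1 case: uniqueness. -/
lemma weier_unique (j : Fin n) (p : R) (hT : IsUnit (opT j p)) (h0 : cc p = 0)
    (q s : R) (h : q * p + s = 0) (hs : opT j s = 0) : q = 0 ∧ s = 0 := by
  classical
  obtain ⟨u, hu⟩ := hT
  have hOkc : Ok j 1 (opR j p) := Ok_c j p h0
  set c : MvPowerSeries (Fin n) ℂ := opR j p with hc
  have h1 : q * opT j p + opT j q * c + opT j s = 0 := by
    have h2 := congrArg (opT j) h
    rw [opT_add, opT_mul, opT_zero] at h2
    rw [← hc] at h2
    exact h2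
  have hq0 : q * (↑u : R) = -(opT j q * c) := by
    rw [hs, add_zero, ← hu] at h1
    exact eq_neg_of_add_eq_zero_left h1
  have hq : q = -((↑u⁻¹ : R) * (c * opT j q)) := by
    calc q = (↑u⁻¹ : R) * (q * ↑u) := by
          rw [mul_comm q (↑u : R), ← mul_assoc, Units.inv_mul, one_mul]
      _ = (↑u⁻¹ : R) * -(opT j q * c) := by rw [hq0]
      _ = -((↑u⁻¹ : R) * (c * opT j q)) := by ring
  have hOk : ∀ k, Ok j k q := by
    intro k
    induction k with
    | zero => exact Ok_zero j q
    | succ k ih =>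
      have h3 : Ok j (1 + k) (c * opT j q) := Ok_mul j hOkc (Ok_T j ih)
      have h4 := Ok_mul j (Ok_zero j ((↑u⁻¹ : R))) h3
      have h5 : Ok j (k+1) (-((↑u⁻¹ : R) * (c * opT j q))) :=
        Ok_neg j (Ok_mono j (by omega) h4)
      rw [hq]
      exact h5
  have hqz : q = 0 := eq_zero_of_Ok j q hOk
  refine ⟨hqz, ?_⟩
  rw [hqz, zero_mul, zero_add] at h
  exact h

lemma deg_one_single (d : Fin n →₀ ℕ) (hd : Finsupp.degree d = 1) :
    ∃ j : Fin n, d = Finsupp.single j 1 := by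
  have hne : d ≠ 0 := by
    intro h
    rw [h] at hd
    simp at hd
  obtain ⟨i, hi⟩ := Finsupp.support_nonempty_iff.mpr hne
  have hii : d i ≠ 0 := Finsupp.mem_support_iff.mp hi
  have hsplit : Finsupp.single i (d i) + Finsupp.erase i d = d := Finsupp.single_add_erase i d
  have hdeg : Finsupp.degree d = d i + Finsupp.degree (Finsupp.erase i d) := by
    conv_lhs => rw [← hsplit]
    rw [deg_add]
    congr 1
    exact Finsupp.degree_single i (d i)
  have h1 : d i = 1 := by omega
  have h2 : Finsupp.degree (Finsupp.erase i d) = 0 := by omega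
  have h3 : Finsupp.erase i d = 0 := (Finsupp.degree_eq_zero_iff _).mp h2
  refine ⟨i, ?_⟩
  rw [← hsplit, h3, add_zero, h1]

/-- Any power series of order one is prime. -/
lemma prime_of_order_one (p : R) (hp : p.order = 1) : Prime p := by
  classical
  have hp1 : p.order = ((1:ℕ) : ℕ∞) := by exact_mod_cast hp
  obtain ⟨⟨d, hd0, hdeg⟩, hlow⟩ := (MvPowerSeries.order_eq_nat (f := p) (n := 1)).mp hp1
  obtain ⟨j, rfl⟩ := deg_one_single d hdeg
  have h0 : cc p = 0 := by
    have h1 := hlow 0 (by simp)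
    rw [← h1]
    rfl
  have hT : IsUnit (opT j p) := by
    rw [unit_iff]
    have h2 : cc (opT j p) = coeff ((0 : Fin n →₀ ℕ) + Finsupp.single j 1) p := rfl
    rw [h2, zero_add]
    exact hd0
  refine ⟨?_, ?_, ?_⟩
  · intro h
    rw [h] at hp
    simp at hp
  · rw [unit_iff]
    simp [h0]
  · intro u v huv
    by_contra hcon
    push_neg at hcon
    obtain ⟨hpu, hpv⟩ := hcon
    obtain ⟨t, ht⟩ := huv
    obtain ⟨q₁, s₁, hu1, hs1⟩ := weier_div j p hT h0 u
    obtain ⟨q₂, s₂, hv2, hs2⟩ := weier_div j p hT h0 v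
    have hs1ne : s₁ ≠ 0 := by
      intro hzz
      exact hpu ⟨q₁, by rw [hu1, hzz, add_zero, mul_comm]⟩
    have hs2ne : s₂ ≠ 0 := by
      intro hzz
      exact hpv ⟨q₂, by rw [hv2, hzz, add_zero, mul_comm]⟩
    have hkey : (q₁ * q₂ * p + q₁ * s₂ + s₁ * q₂ - t) * p + s₁ * s₂ = 0 := by
      rw [hu1, hv2] at ht
      linear_combination ht
    have hTs : opT j (s₁ * s₂) = 0 := by
      rw [opT_mul, hs1, hs2]
      simp
    obtain ⟨-, hzz⟩ := weier_unique j p hT h0 _ _ hkey hTs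
    exact (mul_ne_zero hs1ne hs2ne) hzz

end WeierstrassDegreeOne

section OrderFacts

lemma order_mul' (u v : R) (hu : u ≠ 0) (hv : v ≠ 0) :
    (u * v).order = u.order + v.order := by
  classical
  obtain ⟨Nu, hNu⟩ := order_finite u hu
  obtain ⟨Nv, hNv⟩ := order_finite v hv
  set U : MvPowerSeries (Fin n) ℂ := MvPowerSeries.homogeneousComponent Nu u with hUdef
  set V : MvPowerSeries (Fin n) ℂ := MvPowerSeries.homogeneousComponent Nv v with hVdef
  have hU : ∀ d, coeff d U = if Finsupp.degree d = Nu then coeff d u else 0 :=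
    fun d => MvPowerSeries.coeff_homogeneousComponent Nu d u
  have hV : ∀ d, coeff d V = if Finsupp.degree d = Nv then coeff d v else 0 :=
    fun d => MvPowerSeries.coeff_homogeneousComponent Nv d v
  have hordu : u.order.toNat = u.order := by rw [hNu]; rfl
  have hordv : v.order.toNat = v.order := by rw [hNv]; rfl
  have hUne : U ≠ 0 := by
    obtain ⟨d, hd, hdeg⟩ := MvPowerSeries.exists_coeff_ne_zero_and_order hordu
    rw [hNu] at hdeg
    have hdeg' : Finsupp.degree d = Nu := by exact_mod_cast hdeg
    intro hz
    apply hd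
    have := hU d
    rw [hz, map_zero, if_pos hdeg'] at this
    exact this.symm
  have hVne : V ≠ 0 := by
    obtain ⟨d, hd, hdeg⟩ := MvPowerSeries.exists_coeff_ne_zero_and_order hordv
    rw [hNv] at hdeg
    have hdeg' : Finsupp.degree d = Nv := by exact_mod_cast hdeg
    intro hz
    apply hd
    have := hV d
    rw [hz, map_zero, if_pos hdeg'] at this
    exact this.symm
  have hUV : U * V ≠ 0 := mul_ne_zero hUne hVne
  obtain ⟨D, hD⟩ : ∃ D, coeff D (U * V) ≠ 0 := by
    by_contra hcont
    push_neg at hcont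
    apply hUV
    ext e
    rw [map_zero]
    exact hcont e
  have hDsum := hD
  rw [coeff_mul] at hDsum
  obtain ⟨P, hPmem, hPne⟩ := Finset.exists_ne_zero_of_sum_ne_zero hDsum
  have h1 : coeff P.1 U ≠ 0 := left_ne_zero_of_mul hPne
  have h2 : coeff P.2 V ≠ 0 := right_ne_zero_of_mul hPne
  have hdeg1 : Finsupp.degree P.1 = Nu := by
    by_contra hk
    rw [hU, if_neg hk] at h1
    exact h1 rfl
  have hdeg2 : Finsupp.degree P.2 = Nv := by
    by_contra hk
    rw [hV, if_neg hk] at h2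
    exact h2 rfl
  rw [HasAntidiagonal.mem_antidiagonal] at hPmem
  have hDdeg : Finsupp.degree D = Nu + Nv := by
    rw [← hPmem, deg_add, hdeg1, hdeg2]
  have hcoeff : coeff D (u * v) ≠ 0 := by
    rw [coeff_mul]
    have hcong : ∀ p ∈ antidiagonal D,
        coeff p.1 u * coeff p.2 v = coeff p.1 U * coeff p.2 V := by
      intro p hp
      rw [HasAntidiagonal.mem_antidiagonal] at hp
      have hadd : Finsupp.degree p.1 + Finsupp.degree p.2 = Nu + Nv := by
        rw [← deg_add, hp, hDdeg]
      rcases lt_trichotomy (Finsupp.degree p.1) Nu with hcase|hcase|hcase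
      · have hz1 : coeff p.1 u = 0 := by
          apply MvPowerSeries.coeff_of_lt_order
          rw [hNu]
          exact_mod_cast hcase
        rw [hz1, hU, if_neg (by omega)]
        ring
      · have hq : Finsupp.degree p.2 = Nv := by omega
        rw [hU, hV, if_pos hcase, if_pos hq]
      · have hq : Finsupp.degree p.2 < Nv := by omega
        have hz2 : coeff p.2 v = 0 := by
          apply MvPowerSeries.coeff_of_lt_order
          rw [hNv]
          exact_mod_cast hq
        rw [hz2, hV, if_neg (by omega)]
        ring
    rw [Finset.sum_congr rfl hcong]
    rw [coeff_mul] at hD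
    exact hD
  have hle : (u * v).order ≤ ((Nu + Nv : ℕ) : ℕ∞) := by
    have := MvPowerSeries.order_le hcoeff
    rw [hDdeg] at this
    exact_mod_cast this
  have hge : ((Nu + Nv : ℕ) : ℕ∞) ≤ (u * v).order := by
    have := MvPowerSeries.le_order_mul (f := u) (g := v)
    rw [hNu, hNv] at this
    exact_mod_cast this
  rw [hNu, hNv]
  rw [le_antisymm hle hge]
  push_cast
  rfl

lemma one_le_order (w : R) (h : cc w = 0) : 1 ≤ w.order := by
  apply MvPowerSeries.le_order
  intro d hd
  have hd0 : d = 0 := by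
    rw [show ((1:ℕ∞)) = ((1:ℕ) : ℕ∞) from rfl] at hd
    have : Finsupp.degree d < 1 := by exact_mod_cast hd
    exact (Finsupp.degree_eq_zero_iff d).mp (Nat.lt_one_iff.mp this)
  rw [hd0]
  exact h

lemma cc_eq_zero_of_one_le_order (w : R) (h : 1 ≤ w.order) : cc w = 0 := by
  have : coeff (0 : Fin n →₀ ℕ) w = 0 := by
    apply MvPowerSeries.coeff_of_lt_order
    apply lt_of_lt_of_le _ h
    simp
  exact this

lemma exists_pd_order (w : R) (N : ℕ) (hN : w.order = ((N + 1 : ℕ) : ℕ∞)) :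
    ∃ j, pd j w ≠ 0 ∧ (pd j w).order = (N : ℕ∞) := by
  classical
  obtain ⟨⟨d, hd, hdeg⟩, hlow⟩ := (MvPowerSeries.order_eq_nat (f := w) (n := N+1)).mp hN
  have hdne : d ≠ 0 := by
    intro h
    rw [h] at hdeg
    simp at hdeg
  obtain ⟨i, hi⟩ := Finsupp.support_nonempty_iff.mpr hdne
  have hdi : 1 ≤ d i := Nat.pos_of_ne_zero (Finsupp.mem_support_iff.mp hi)
  have hle : Finsupp.single i 1 ≤ d := Finsupp.single_le_iff.mpr hdi
  set d' := d - Finsupp.single i 1 with hd'def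
  have hsum : d' + Finsupp.single i 1 = d := tsub_add_cancel_of_le hle
  have hd'i : d' i + 1 = d i := by
    rw [hd'def, Finsupp.tsub_apply, Finsupp.single_eq_same]
    omega
  have hco : coeff d' (pd i w) = ((d' i + 1 : ℕ) : ℂ) * coeff d w := by
    rw [coeff_pd, hsum]
  have hcone : coeff d' (pd i w) ≠ 0 := by
    rw [hco]
    exact mul_ne_zero (Nat.cast_ne_zero.mpr (by omega)) hd
  have hdeg' : Finsupp.degree d' = N := by
    have h1 : Finsupp.degree d' + 1 = N + 1 := by
      rw [← hdeg, ← hsum, deg_add, deg_single]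
    omega
  have hord : (pd i w).order = (N : ℕ∞) := by
    rw [MvPowerSeries.order_eq_nat]
    refine ⟨⟨d', hcone, hdeg'⟩, ?_⟩
    intro e he
    rw [coeff_pd]
    have hz : coeff (e + Finsupp.single i 1) w = 0 := by
      apply hlow
      rw [deg_add, deg_single]
      omega
    rw [hz, mul_zero]
  refine ⟨i, ?_, hord⟩
  intro hz
  rw [hz, map_zero] at hcone
  exact hcone rfl

lemma le_order_pd (j : Fin n) (w : R) (M : ℕ) (h : ((M + 1 : ℕ) : ℕ∞) ≤ w.order) :
    ((M : ℕ) : ℕ∞) ≤ (pd j w).order := by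
  apply MvPowerSeries.le_order
  intro d hd
  rw [coeff_pd]
  have hdM : Finsupp.degree d < M := by exact_mod_cast hd
  have hz : coeff (d + Finsupp.single j 1) w = 0 := by
    apply MvPowerSeries.coeff_of_lt_order
    apply lt_of_lt_of_le _ h
    rw [deg_add, deg_single]
    exact_mod_cast (by omega : Finsupp.degree d + 1 < M + 1)
  rw [hz, mul_zero]

end OrderFacts

section MainArgument

/-- If `a` has order 1 and `h` is a nonzero non-unit with `h ∣ a * ∂ⱼ h` for all `j`,
then `a ∣ h`. -/
lemma step1 (a h : R) (ha1 : a.order = 1) (hh0 : h ≠ 0) (hhnu : ¬IsUnit h)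
    (hdvd : ∀ j, h ∣ a * pd j h) : a ∣ h := by
  have ha0 : a ≠ 0 := by
    intro hz
    rw [hz] at ha1
    simp at ha1
  have hccx : cc h = 0 := by
    by_contra hcc
    exact hhnu ((unit_iff h).mpr hcc)
  obtain ⟨N, hN⟩ := order_finite h hh0
  have hN1 : 1 ≤ N := by
    have := one_le_order h hccx
    rw [hN] at this
    exact_mod_cast this
  obtain ⟨N', rfl⟩ : ∃ N', N = N' + 1 := ⟨N - 1, by omega⟩
  obtain ⟨j, hpdne, hpdord⟩ := exists_pd_order h N' (by exact_mod_cast hN)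
  obtain ⟨q, hq⟩ := hdvd j
  have hqne : q ≠ 0 := by
    intro hz
    rw [hz, mul_zero] at hq
    exact (mul_ne_zero ha0 hpdne) hq
  have h1 : a.order + (pd j h).order = h.order + q.order := by
    rw [← order_mul' a _ ha0 hpdne, hq, order_mul' h q hh0 hqne]
  rw [ha1, hpdord, hN] at h1
  have hq0 : q.order = 0 := by
    have h2 : ((N' + 1 : ℕ) : ℕ∞) + (0 : ℕ∞) = ((N' + 1 : ℕ) : ℕ∞) + q.order := by
      rw [add_zero, ← h1]
      push_cast
      ring
    exact (WithTop.add_left_cancel (WithTop.natCast_ne_top _) h2).symm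
  have hqu : IsUnit q := by
    rw [unit_iff]
    intro hcc
    have := one_le_order q hcc
    rw [hq0] at this
    simp at this
  obtain ⟨uq, huq⟩ := hqu
  refine ⟨pd j h * ↑uq⁻¹, ?_⟩
  have h3 : a * pd j h * (↑uq⁻¹ : R) = h * ((↑uq : R) * ↑uq⁻¹) := by
    rw [hq, ← huq]
    ring
  rw [Units.mul_inv, mul_one] at h3
  linear_combination -h3

lemma main_rec (a F : R) (ha1 : a.order = 1) (hF0 : F ≠ 0)
    (hdvd : ∀ j, F ∣ a * pd j F) :
    ∃ (m : ℕ) (u : R), IsUnit u ∧ F = a ^ m * u := by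
  by_contra hC
  push_neg at hC
  have ha0 : a ≠ 0 := by
    intro hz
    rw [hz] at ha1
    simp at ha1
  have key : ∀ m : ℕ, ∃ h : R, F = a ^ m * h ∧ ∀ j, h ∣ a * pd j h := by
    intro m
    induction m with
    | zero => exact ⟨F, by rw [pow_zero, one_mul], hdvd⟩
    | succ m ih =>
      obtain ⟨h, hFh, hd⟩ := ih
      have hh0 : h ≠ 0 := by
        intro hz
        exact hF0 (by rw [hFh, hz, mul_zero])
      have hhnu : ¬IsUnit h := fun hu => hC m h hu hFh
      obtain ⟨h', hh'⟩ := step1 a h ha1 hh0 hhnu hd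
      refine ⟨h', by rw [hFh, hh', pow_succ]; ring, ?_⟩
      intro j
      have h1 : h ∣ a * pd j h := hd j
      rw [hh', pd_mul] at h1
      obtain ⟨t, ht⟩ := h1
      have h2 : pd j a * h' + a * pd j h' = h' * t := by
        apply mul_left_cancel₀ ha0
        rw [ht]
        ring
      exact ⟨t - pd j a, by linear_combination h2⟩
  obtain ⟨NF, hNF⟩ := order_finite F hF0
  obtain ⟨h, hFh, -⟩ := key (NF + 1)
  have hh0 : h ≠ 0 := by
    intro hz
    exact hF0 (by rw [hFh, hz, mul_zero])
  have hpow : ∀ m : ℕ, ((m : ℕ) : ℕ∞) ≤ (a ^ m).order := by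
    intro m
    induction m with
    | zero => simp
    | succ m ih =>
      calc ((m + 1 : ℕ) : ℕ∞) = 1 + (m : ℕ) := by push_cast; ring
        _ ≤ a.order + (a ^ m).order := add_le_add (le_of_eq ha1.symm) ih
        _ ≤ (a * a ^ m).order := MvPowerSeries.le_order_mul
        _ = (a ^ (m+1)).order := by rw [← pow_succ']
  have hbig : ((NF + 1 : ℕ) : ℕ∞) ≤ F.order := by
    calc ((NF + 1 : ℕ) : ℕ∞) ≤ (a ^ (NF + 1)).order := hpow (NF + 1)
      _ ≤ (a ^ (NF + 1)).order + h.order := le_self_add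
      _ ≤ ((a ^ (NF + 1)) * h).order := MvPowerSeries.le_order_mul
      _ = F.order := by rw [← hFh]
  rw [hNF] at hbig
  have : NF + 1 ≤ NF := by exact_mod_cast hbig
  omega

lemma assoc_of_dvd_pow_mul_unit (a : R) (hp : Prime a) (q : R) (hq : Irreducible q) :
    ∀ (m : ℕ) (u : R), IsUnit u → q ∣ a ^ m * u → Associated q a := by
  intro m
  induction m with
  | zero =>
    intro u hu hdvd
    rw [pow_zero, one_mul] at hdvd
    exact absurd (isUnit_of_dvd_unit hdvd hu) hq.not_isUnit
  | succ m ih =>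
    intro u hu hdvd
    by_cases haq : a ∣ q
    · obtain ⟨t, ht⟩ := haq
      rcases hq.isUnit_or_isUnit ht with h|h
      · exact absurd h hp.not_unit
      · exact Associated.symm ⟨h.unit, by rw [IsUnit.unit_spec]; exact ht.symm⟩
    · obtain ⟨c, hc⟩ := hdvd
      have hadvd : a ∣ q * c := ⟨a ^ m * u, by rw [← hc, pow_succ]; ring⟩
      rcases (Prime.dvd_mul hp).mp hadvd with h|h
      · exact absurd h haq
      · obtain ⟨c', hc'⟩ := h
        have h2 : a ^ m * u = q * c' := by
          apply mul_left_cancel₀ hp.ne_zero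
          calc a * (a ^ m * u) = a ^ (m + 1) * u := by rw [pow_succ]; ring
            _ = q * c := hc
            _ = q * (a * c') := by rw [← hc']
            _ = a * (q * c') := by ring
        exact ih u hu ⟨c', h2⟩

end MainArgument

end Stmt13Aux

/-- for `n ≥ 2` and `f = f₁^{k₁}⋯f_r^{k_r}` with `r ≥ 2` pairwise
non-associated irreducible factors, `(f)` is not a Tjurina ideal. -/
theorem stmt_13 {n r : ℕ} (hn : 2 ≤ n) (hr : 2 ≤ r) (f : Fin r → MvPowerSeries (Fin n) ℂ)
    (hirr : ∀ i, Irreducible (f i))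
    (hassoc : ∀ i j, i ≠ j → ¬ Associated (f i) (f j))
    (k : Fin r → ℕ) (hk : ∀ i, 1 ≤ k i) :
    ¬ ∃ g : MvPowerSeries (Fin n) ℂ, Ideal.span {∏ i, f i ^ k i} = Tj g := by
  classical
  open MvPowerSeries Finset Stmt13Aux in
  rintro ⟨g, hg⟩
  set F : MvPowerSeries (Fin n) ℂ := ∏ i, f i ^ k i with hF
  set i0 : Fin r := ⟨0, by omega⟩ with hi0
  set i1 : Fin r := ⟨1, by omega⟩ with hi1
  have hne01 : i0 ≠ i1 := by
    intro h
    have := congrArg Fin.val h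
    simp [hi0, hi1] at this
  have hFne : F ≠ 0 := by
    rw [hF]
    apply Finset.prod_ne_zero_iff.mpr
    intro i _
    exact pow_ne_zero _ (hirr i).ne_zero
  have hcc0 : MvPowerSeries.constantCoeff (f i0) = 0 := by
    have h1 := (hirr i0).not_isUnit
    rw [MvPowerSeries.isUnit_iff_constantCoeff, isUnit_iff_ne_zero] at h1
    exact not_ne_iff.mp h1
  have hFcc : MvPowerSeries.constantCoeff F = 0 := by
    show MvPowerSeries.constantCoeff F = 0
    rw [hF, map_prod]
    apply Finset.prod_eq_zero (Finset.mem_univ i0)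
    rw [map_pow, hcc0]
    exact zero_pow (by have := hk i0; omega)
  have hFnu : ¬IsUnit F := fun hu => ((Stmt13Aux.unit_iff F).mp hu) hFcc
  have hgmem : g ∈ Tj g := Ideal.subset_span (Or.inl rfl)
  rw [← hg] at hgmem
  obtain ⟨a, hga⟩ : ∃ a, g = a * F := by
    obtain ⟨a, ha⟩ := Ideal.mem_span_singleton.mp hgmem
    exact ⟨a, by rw [ha]; ring⟩
  have hpdmem : ∀ j, F ∣ pd j g := by
    intro j
    have hmem : pd j g ∈ Tj g := Ideal.subset_span (Or.inr ⟨j, rfl⟩)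
    rw [← hg] at hmem
    exact Ideal.mem_span_singleton.mp hmem
  have hdvd : ∀ j, F ∣ a * pd j F := by
    intro j
    have h1 := hpdmem j
    rw [hga, Stmt13Aux.pd_mul] at h1
    exact (dvd_add_right (dvd_mul_left F (pd j a))).mp h1
  have hdvd2 := hdvd
  choose qj hqj using hdvd2
  have ha0 : a ≠ 0 := by
    intro hz
    have hgz : g = 0 := by rw [hga, hz, zero_mul]
    have hle : Tj g ≤ ⊥ := by
      show Ideal.span ({g} ∪ Set.range fun j => pd j g) ≤ ⊥
      rw [Ideal.span_le]
      rintro x (hx | ⟨j, rfl⟩)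
      · rw [Set.mem_singleton_iff] at hx
        simp [hx, hgz]
      · simp [hgz, Stmt13Aux.pd_zero]
    have : F ∈ Tj g := by rw [← hg]; exact Ideal.mem_span_singleton_self F
    exact hFne (Ideal.mem_bot.mp (hle this))
  have hFmem : F ∈ Tj g := by rw [← hg]; exact Ideal.mem_span_singleton_self F
  have hTjeq : Tj g = Ideal.span (Set.range (Fin.cons g (fun j => pd j g) : Fin (n+1) → _)) := by
    show Ideal.span ({g} ∪ Set.range fun j => pd j g) = _
    rw [Fin.range_cons, Set.singleton_union]
  rw [hTjeq] at hFmem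
  obtain ⟨c, hc⟩ := (Submodule.mem_span_range_iff_exists_fun _).mp hFmem
  rw [Fin.sum_univ_succ] at hc
  simp only [Fin.cons_zero, Fin.cons_succ, smul_eq_mul] at hc
  have key0 : F * 1 = F * (c 0 * a + ∑ j, c j.succ * (pd j a + qj j)) := by
    rw [mul_one]
    calc F = c 0 * g + ∑ j, c j.succ * pd j g := hc.symm
      _ = c 0 * (a * F) + ∑ j, c j.succ * (pd j a * F + F * qj j) := by
          rw [hga]
          congr 1
          apply Finset.sum_congr rfl
          intro j _
          rw [Stmt13Aux.pd_mul, hqj j]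
      _ = F * (c 0 * a) + ∑ j, F * (c j.succ * (pd j a + qj j)) := by
          congr 1
          · ring
          · apply Finset.sum_congr rfl
            intro j _
            ring
      _ = F * (c 0 * a + ∑ j, c j.succ * (pd j a + qj j)) := by
          rw [mul_add, Finset.mul_sum]
  have key := mul_left_cancel₀ hFne key0
  have hanu : ¬IsUnit a := by
    intro hu
    obtain ⟨NF, hNF⟩ := Stmt13Aux.order_finite F hFne
    have hNF1 : 1 ≤ NF := by
      have := Stmt13Aux.one_le_order F hFcc
      rw [hNF] at this
      exact_mod_cast this
    obtain ⟨NF', hNF'⟩ : ∃ NF', NF = NF' + 1 := ⟨NF - 1, by omega⟩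
    rw [hNF'] at hNF
    obtain ⟨j, hpdne, hpdord⟩ := Stmt13Aux.exists_pd_order F NF' (by exact_mod_cast hNF)
    obtain ⟨ua, hua⟩ := hu
    obtain ⟨t, ht⟩ := hdvd j
    have hFpd : F ∣ pd j F := by
      refine ⟨(↑ua⁻¹ : MvPowerSeries (Fin n) ℂ) * t, ?_⟩
      calc pd j F = ((↑ua⁻¹ : MvPowerSeries (Fin n) ℂ) * ↑ua) * pd j F := by
            rw [Units.inv_mul, one_mul]
        _ = (↑ua⁻¹ : MvPowerSeries (Fin n) ℂ) * (a * pd j F) := by rw [hua]; ring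
        _ = (↑ua⁻¹ : MvPowerSeries (Fin n) ℂ) * (F * t) := by rw [ht]
        _ = F * ((↑ua⁻¹ : MvPowerSeries (Fin n) ℂ) * t) := by ring
    obtain ⟨s, hs⟩ := hFpd
    have hsne : s ≠ 0 := by
      intro hz
      rw [hz, mul_zero] at hs
      exact hpdne hs
    have hcontra := MvPowerSeries.le_order_mul (f := F) (g := s)
    rw [← hs, hpdord, hNF] at hcontra
    have h2 : ((NF' + 1 : ℕ) : ℕ∞) ≤ ((NF' : ℕ) : ℕ∞) := le_trans le_self_add hcontra
    have : NF' + 1 ≤ NF' := by exact_mod_cast h2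
    omega
  have hacc : MvPowerSeries.constantCoeff a = 0 := by
    by_contra hccc
    exact hanu ((Stmt13Aux.unit_iff a).mpr hccc)
  have haor : a.order = 1 := by
    obtain ⟨Na, hNa⟩ := Stmt13Aux.order_finite a ha0
    have h1 : 1 ≤ Na := by
      have := Stmt13Aux.one_le_order a hacc
      rw [hNa] at this
      exact_mod_cast this
    rcases Nat.lt_or_ge Na 2 with hcase|hcase
    · have hNa1 : Na = 1 := by omega
      rw [hNa, hNa1]
      rfl
    · exfalso
      have hccpd : ∀ j, MvPowerSeries.constantCoeff (pd j a) = 0 := by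
        intro j
        have hz : MvPowerSeries.coeff (Finsupp.single j 1) a = 0 := by
          apply MvPowerSeries.coeff_of_lt_order
          rw [hNa, Stmt13Aux.deg_single]
          exact_mod_cast (by omega : 1 < Na)
        have h2 : MvPowerSeries.constantCoeff (pd j a)
            = ((0 + 1 : ℕ) : ℂ) * MvPowerSeries.coeff ((0 : Fin n →₀ ℕ) + Finsupp.single j 1) a := rfl
        rw [h2]
        simp only [zero_add]
        rw [hz, mul_zero]
      have hccq : ∀ j, MvPowerSeries.constantCoeff (qj j) = 0 := by
        intro j
        by_cases hq0 : qj j = 0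
        · rw [hq0]; exact map_zero _
        by_cases hpdF : pd j F = 0
        · exfalso
          have : F * qj j = 0 := by rw [← hqj j, hpdF, mul_zero]
          rcases mul_eq_zero.mp this with h'|h'
          · exact hFne h'
          · exact hq0 h'
        apply Stmt13Aux.cc_eq_zero_of_one_le_order
        have hordeq : a.order + (pd j F).order = F.order + (qj j).order := by
          rw [← Stmt13Aux.order_mul' a _ ha0 hpdF, hqj j, Stmt13Aux.order_mul' F _ hFne hq0]
        obtain ⟨NF, hNF⟩ := Stmt13Aux.order_finite F hFne
        have hNF1 : 1 ≤ NF := by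
          have := Stmt13Aux.one_le_order F hFcc
          rw [hNF] at this
          exact_mod_cast this
        obtain ⟨NF', hNF'⟩ : ∃ NF', NF = NF' + 1 := ⟨NF - 1, by omega⟩
        obtain ⟨Np, hNp⟩ := Stmt13Aux.order_finite _ hpdF
        obtain ⟨Nq, hNq⟩ := Stmt13Aux.order_finite _ hq0
        have hpd' : ((NF' : ℕ) : ℕ∞) ≤ (pd j F).order := by
          apply Stmt13Aux.le_order_pd
          rw [hNF, hNF']
        rw [hNp] at hpd'
        have hNp' : NF' ≤ Np := by exact_mod_cast hpd'
        rw [hNa, hNp, hNF, hNq] at hordeq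
        have heq : Na + Np = NF + Nq := by exact_mod_cast hordeq
        have : 1 ≤ Nq := by omega
        rw [hNq]
        exact_mod_cast this
      have h2 := congrArg (MvPowerSeries.constantCoeff) key
      rw [map_one, map_add, map_mul, map_sum] at h2
      simp only [map_mul, map_add] at h2
      have h3 : ∑ j : Fin n, MvPowerSeries.constantCoeff (c j.succ) *
          (MvPowerSeries.constantCoeff (pd j a)
            + MvPowerSeries.constantCoeff (qj j)) = 0 :=
        Finset.sum_eq_zero (fun j _ => by rw [hccpd j, hccq j, add_zero, mul_zero])
      rw [h3, hacc, mul_zero, add_zero] at h2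
      exact one_ne_zero h2
  obtain ⟨m, u, hu, hFau⟩ := Stmt13Aux.main_rec a F haor hFne hdvd
  have hprime : Prime a := Stmt13Aux.prime_of_order_one a haor
  have hdvd0 : f i0 ∣ F := by
    rw [hF]
    exact dvd_trans (dvd_pow_self (f i0) (by have := hk i0; omega))
      (Finset.dvd_prod_of_mem _ (Finset.mem_univ i0))
  have hdvd1 : f i1 ∣ F := by
    rw [hF]
    exact dvd_trans (dvd_pow_self (f i1) (by have := hk i1; omega))
      (Finset.dvd_prod_of_mem _ (Finset.mem_univ i1))
  have hass0 : Associated (f i0) a :=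
    Stmt13Aux.assoc_of_dvd_pow_mul_unit a hprime (f i0) (hirr i0) m u hu (hFau ▸ hdvd0)
  have hass1 : Associated (f i1) a :=
    Stmt13Aux.assoc_of_dvd_pow_mul_unit a hprime (f i1) (hirr i1) m u hu (hFau ▸ hdvd1)
  exact hassoc i0 i1 hne01 (hass0.trans hass1.symm)
end

section
/- Let n ≥ 2 and let I ⊆ R be a nontrivial principal ideal (I ≠ (0), I ≠ R). Then I is a Tjurina ideal if and only if I is T-full, i.e. I = T(Δ(I)). -/
lemma self_mem_Tj {n : ℕ} (f : MvPowerSeries (Fin n) ℂ) : f ∈ Tj f :=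
  Ideal.subset_span (Or.inl rfl)

lemma pd_mem_Tj {n : ℕ} (j : Fin n) (f : MvPowerSeries (Fin n) ℂ) : pd j f ∈ Tj f :=
  Ideal.subset_span (Or.inr ⟨j, rfl⟩)

lemma Tset_Del_le {n : ℕ} (I : Ideal (MvPowerSeries (Fin n) ℂ)) : Tset (Del I) ≤ I := by
  rw [Tset, Ideal.span_le]
  rintro w (hw | ⟨f, hf, j, rfl⟩)
  · exact hw (self_mem_Tj w)
  · exact hf (pd_mem_Tj j f)


/-- for `n ≥ 2` and a nontrivial principal ideal `I`, `I` is a Tjurina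
ideal iff `I` is T-full, i.e. `I = T(Δ(I))`. -/
theorem stmt_14 {n : ℕ} (hn : 2 ≤ n) (I : Ideal (MvPowerSeries (Fin n) ℂ))
    (hb : I ≠ ⊥) (ht : I ≠ ⊤) (hp : I.IsPrincipal) :
    (∃ f : MvPowerSeries (Fin n) ℂ, I = Tj f) ↔ I = Tset (Del I) := by
  constructor
  · rintro ⟨f, hf⟩
    refine le_antisymm ?_ (Tset_Del_le I)
    have hfD : f ∈ Del I := le_of_eq hf.symm
    have h2 : Tj f ≤ Tset (Del I) := by
      rw [Tj, Ideal.span_le]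
      rintro w (hw | ⟨j, rfl⟩)
      · exact Ideal.subset_span (Or.inl (by rwa [Set.mem_singleton_iff.mp hw]))
      · exact Ideal.subset_span (Or.inr ⟨f, hfD, j, rfl⟩)
    exact hf.le.trans h2
  · intro hT
    obtain ⟨g, hg⟩ := hp
    have hg0 : g ≠ 0 := by
      rintro rfl
      exact hb (by rw [hg]; exact Ideal.span_singleton_eq_bot.mpr rfl)
    -- the set of generators of Tset (Del I)
    set S : Set (MvPowerSeries (Fin n) ℂ) :=
      Del I ∪ {g' | ∃ f ∈ Del I, ∃ j, g' = pd j f} with hS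
    have hSI : ∀ w ∈ S, w ∈ I := by
      rintro w (hw | ⟨f, hf, j, rfl⟩)
      · exact hw (self_mem_Tj w)
      · exact hf (pd_mem_Tj j f)
    -- there is a generator w = g * c with c a unit
    have key : ∃ w ∈ S, ∃ c, w = g * c ∧ IsUnit c := by
      by_contra hcon
      push_neg at hcon
      set K : Ideal (MvPowerSeries (Fin n) ℂ) :=
        RingHom.ker (MvPowerSeries.constantCoeff (σ := Fin n) (R := ℂ)) with hK
      have hle : I ≤ Ideal.span {g} * K := by
        rw [hT, Tset, Ideal.span_le]
        intro w hw
        have hwI : w ∈ I := hSI w hw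
        rw [hg] at hwI
        obtain ⟨c, hc⟩ := Ideal.mem_span_singleton.mp hwI
        have hcu : ¬ IsUnit c := fun h => hcon w hw c hc h
        have hcK : c ∈ K := by
          rw [hK, RingHom.mem_ker]
          by_contra h0
          exact hcu (MvPowerSeries.isUnit_iff_constantCoeff.mpr (isUnit_iff_ne_zero.mpr h0))
        rw [hc]
        exact Ideal.mul_mem_mul (Ideal.mem_span_singleton_self g) hcK
      have hgmem : g ∈ Ideal.span {g} * K := hle (hg ▸ Ideal.mem_span_singleton_self g)
      rw [Ideal.mem_span_singleton_mul] at hgmem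
      obtain ⟨t, htK, hgt⟩ := hgmem
      have ht0 : MvPowerSeries.constantCoeff (σ := Fin n) (R := ℂ) t = 0 := htK
      have hunit : IsUnit (1 - t) := by
        rw [MvPowerSeries.isUnit_iff_constantCoeff]
        simp [ht0]
      have hz : g * (1 - t) = 0 := by rw [mul_sub, mul_one, hgt, sub_self]
      rcases mul_eq_zero.mp hz with h | h
      · exact hg0 h
      · exact hunit.ne_zero h
    obtain ⟨w, hwS, c, hwc, hcu⟩ := key
    -- find h ∈ Del I with w ∈ Tj h
    have hwTj : ∃ h ∈ Del I, w ∈ Tj h := by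
      rcases hwS with hw | ⟨f, hf, j, rfl⟩
      · exact ⟨w, hw, self_mem_Tj w⟩
      · exact ⟨f, hf, pd_mem_Tj j f⟩
    obtain ⟨h, hhD, hwh⟩ := hwTj
    obtain ⟨u, rfl⟩ := hcu
    have hgw : g = w * ↑u⁻¹ := by
      rw [hwc, mul_assoc, Units.mul_inv, mul_one]
    have hgTj : g ∈ Tj h := hgw ▸ Ideal.mul_mem_right _ _ hwh
    exact ⟨h, le_antisymm
      (hg.le.trans ((Ideal.span_singleton_le_iff_mem _).mpr hgTj)) hhD⟩
end

section
/- Every Tjurina ideal is T-full: if I ⊆ R is an ideal and I = T(f) for some f ∈ R, then I = T(Δ(I)). -/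
/-- every Tjurina ideal is T-full. -/
theorem stmt_15 {n : ℕ} (I : Ideal (MvPowerSeries (Fin n) ℂ))
    (f : MvPowerSeries (Fin n) ℂ) (h : I = Tj f) : I = Tset (Del I) := by
  have hf : f ∈ Del I := by simp [Del, h]
  apply le_antisymm
  · conv_lhs => rw [h]
    apply Ideal.span_mono
    rintro g (rfl | ⟨j, rfl⟩)
    · exact Or.inl hf
    · exact Or.inr ⟨f, hf, j, rfl⟩
  · rw [Tset, Ideal.span_le]
    rintro g (hg | ⟨f', hf', j, rfl⟩)
    · exact hg (Ideal.subset_span (Or.inl rfl))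
    · exact hf' (Ideal.subset_span (Or.inr ⟨j, rfl⟩))
end
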